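/- arXiv:2309.14501 — 8 statements merged into one kernel-verified Lean document; each statement's English description precedes it below -/
import Mathlib

section
/- For every integer a ≥ 3, z(2^a) = 3·2^{a-2}. -/
/-- The order of appearance of `n` in the Fibonacci sequence: the smallest
positive integer `ℓ` such that `n` divides the `ℓ`-th Fibonacci number. -/
noncomputable def z (n : ℕ) : ℕ := sInf {ℓ : ℕ | 0 < ℓ ∧ n ∣ Nat.fib ℓ}

lemma fib_odd_of_not_three_dvd {n : ℕ} (h : ¬ 3 ∣ n) : ¬ 2 ∣ Nat.fib n := by
  have hg : Nat.Coprime 3 n := (Nat.prime_three.coprime_iff_not_dvd).mpr h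
  intro h2
  have hd : (2:ℕ) ∣ Nat.gcd (Nat.fib 3) (Nat.fib n) := Nat.dvd_gcd (by norm_num) h2
  rw [← Nat.fib_gcd, hg] at hd
  norm_num at hd

lemma key : ∀ b : ℕ, ∃ t : ℕ, Odd t ∧ Nat.fib (3 * 2 ^ (b + 1)) = 2 ^ (b + 3) * t := by
  intro b
  induction b with
  | zero => exact ⟨1, odd_one, by norm_num⟩
  | succ b ih =>
    obtain ⟨t, ht, hfib⟩ := ih
    set k := 3 * 2 ^ (b + 1) with hk
    have h2k : 3 * 2 ^ (b + 1 + 1) = 2 * k := by ring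
    have hk1odd : ¬ 2 ∣ Nat.fib (k + 1) := by
      apply fib_odd_of_not_three_dvd
      omega
    obtain ⟨s, hs⟩ : Odd (Nat.fib (k + 1)) := Nat.odd_iff.mpr (Nat.two_dvd_ne_zero.mp hk1odd)
    have hlt : Nat.fib k < Nat.fib (k + 1) := by
      apply Nat.fib_lt_fib_succ
      have : 2 ^ (b+1) ≥ 2 := Nat.one_lt_two_pow (by omega)
      omega
    have hw : 2 * Nat.fib (k + 1) - Nat.fib k = 2 * (2 * s + 1 - 2 ^ (b + 2) * t) := by
      rw [hs, hfib]
      have h1 : 2 ^ (b + 3) * t = 2 * (2 ^ (b + 2) * t) := by ring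
      omega
    have hge : 2 ^ (b + 2) * t ≤ 2 * s := by
      have : 2 * (2 ^ (b + 2) * t) = Nat.fib k := by rw [hfib]; ring
      omega
    have hwodd : Odd (2 * s + 1 - 2 ^ (b + 2) * t) := by
      rcases ht with ⟨u, hu⟩
      refine ⟨s - 2 ^ (b + 1) * (2 * u + 1), ?_⟩
      have h2 : 2 ^ (b + 2) * t = 2 * (2 ^ (b + 1) * (2 * u + 1)) := by rw [hu]; ring
      omega
    refine ⟨t * (2 * s + 1 - 2 ^ (b + 2) * t), ht.mul hwodd, ?_⟩
    rw [h2k, Nat.fib_two_mul, hw, hfib]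
    ring

theorem z_two_pow (a : ℕ) (ha : 3 ≤ a) : z (2 ^ a) = 3 * 2 ^ (a - 2) := by
  obtain ⟨t, ht, hfib⟩ := key (a - 3)
  have ha2 : a - 3 + 1 = a - 2 := by omega
  have ha3 : a - 3 + 3 = a := by omega
  rw [ha2, ha3] at hfib
  set m := 3 * 2 ^ (a - 2) with hm
  have hmem : m ∈ {ℓ : ℕ | 0 < ℓ ∧ 2 ^ a ∣ Nat.fib ℓ} := by
    constructor
    · positivity
    · exact ⟨t, hfib⟩
  apply IsLeast.csInf_eq
  refine ⟨hmem, ?_⟩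
  intro ℓ hℓ
  obtain ⟨hpos, hdvd⟩ := hℓ
  by_contra hlt
  push_neg at hlt
  set g := Nat.gcd ℓ m with hg
  have hgpos : 0 < g := Nat.gcd_pos_of_pos_left m hpos
  have hgdvd : 2 ^ a ∣ Nat.fib g := by
    rw [hg, Nat.fib_gcd]
    exact Nat.dvd_gcd hdvd hmem.2
  have hgm : g ∣ m := Nat.gcd_dvd_right ℓ m
  have hglt : g < m := lt_of_le_of_lt (Nat.le_of_dvd hpos (Nat.gcd_dvd_left ℓ m)) hlt
  have h2a : (2:ℕ) ∣ 2 ^ a := dvd_pow_self 2 (by omega)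
  by_cases h3 : 3 ∣ g
  · -- g = 3h with h ∣ 2^(a-2), h < 2^(a-2), so g ∣ 3 * 2^(a-3)
    obtain ⟨h, hh⟩ := h3
    have hh2 : h ∣ 2 ^ (a - 2) := by
      have : 3 * h ∣ 3 * 2 ^ (a - 2) := hh ▸ hgm
      exact (mul_dvd_mul_iff_left (by norm_num : (3:ℕ) ≠ 0)).mp this
    obtain ⟨i, hi, hhe⟩ := (Nat.dvd_prime_pow Nat.prime_two).mp hh2
    have hine : i ≠ a - 2 := by
      intro he
      rw [he] at hhe
      omega
    have hgdvd2 : g ∣ 3 * 2 ^ (a - 3) := by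
      rw [hh, hhe]
      exact mul_dvd_mul_left 3 (pow_dvd_pow 2 (by omega))
    have hfg : Nat.fib g ∣ Nat.fib (3 * 2 ^ (a - 3)) := Nat.fib_dvd _ _ hgdvd2
    have h2af : 2 ^ a ∣ Nat.fib (3 * 2 ^ (a - 3)) := hgdvd.trans hfg
    rcases Nat.lt_or_ge a 4 with h4 | h4
    · -- a = 3
      have : a = 3 := by omega
      subst this
      norm_num [Nat.fib] at h2af
    · obtain ⟨t', ht', hfib'⟩ := key (a - 4)
      have e1 : a - 4 + 1 = a - 3 := by omega
      have e2 : a - 4 + 3 = a - 1 := by omega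
      rw [e1, e2] at hfib'
      rw [hfib'] at h2af
      have : 2 ^ a = 2 ^ (a - 1) * 2 := by
        rw [← pow_succ]; congr 1; omega
      rw [this] at h2af
      have h2t : 2 ∣ t' := by
        have hpos' : (0:ℕ) < 2 ^ (a - 1) := by positivity
        rcases h2af with ⟨c, hc⟩
        have : t' = 2 * c := by
          have := Nat.eq_of_mul_eq_mul_left hpos' (by linarith [hc] : 2 ^ (a-1) * t' = 2 ^ (a-1) * (2 * c))
          exact this
        exact ⟨c, this⟩
      rw [Nat.odd_iff] at ht'
      omega
  · -- 3 ∤ g, so fib g is odd, but 2 ∣ 2^a ∣ fib g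
    have := fib_odd_of_not_three_dvd h3
    exact this (h2a.trans hgdvd)
end

section
/- For every positive integer b, z(3^b) = 4·3^{b-1}. -/
open Nat

private lemma cassini (n : ℕ) :
    ((Nat.fib (n+1) : ℤ))^2 - Nat.fib (n+1) * Nat.fib n - (Nat.fib n : ℤ)^2 = (-1)^n := by
  induction n with
  | zero => simp
  | succ m ih =>
    have h : Nat.fib (m+2) = Nat.fib m + Nat.fib (m+1) := Nat.fib_add_two
    push_cast [h]
    push_cast at ih
    ring_nf
    ring_nf at ih
    linarith [ih]

private lemma fib_three_mul (m : ℕ) (hm : Odd m) :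
    Nat.fib (3 * (m+1)) = Nat.fib (m+1) * (5 * Nat.fib (m+1)^2 + 3) := by
  set a := Nat.fib m with ha
  set c := Nat.fib (m+1) with hc
  have h2 : Nat.fib (m+2) = a + c := Nat.fib_add_two
  have h1 : Nat.fib (2*m+1) = a^2 + c^2 := by
    have := Nat.fib_add m m
    rw [show 2*m+1 = m+m+1 by ring]
    rw [this]; ring
  have h2' : Nat.fib (2*m+2) = 2*a*c + c^2 := by
    have := Nat.fib_add m (m+1)
    rw [show 2*m+2 = m+(m+1)+1 by ring, this, h2]; ring
  have h3 : Nat.fib (3*(m+1)) = c * (a^2+c^2) + (a+c) * (2*a*c+c^2) := by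
    have := Nat.fib_add (m+1) (2*m+1)
    rw [show 3*(m+1) = (m+1)+(2*m+1)+1 by ring, this, h1]
    rw [show 2*m+1+1 = 2*m+2 by ring, h2', show m+1+1 = m+2 by ring, h2]
  have hcas : (c:ℤ)^2 - c*a - a^2 = -1 := by
    have := cassini m
    rw [Odd.neg_one_pow hm] at this
    exact_mod_cast this
  have : (Nat.fib (3*(m+1)) : ℤ) = (c:ℤ) * (5 * c^2 + 3) := by
    rw [h3]; push_cast; linear_combination (-3*(c:ℤ)) * hcas
  exact_mod_cast this

private lemma three_dvd_fib_iff (n : ℕ) : 3 ∣ Nat.fib n ↔ 4 ∣ n := by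
  constructor
  · intro h
    have hg : Nat.fib (Nat.gcd n 4) = Nat.gcd (Nat.fib n) (Nat.fib 4) :=
      Nat.fib_gcd n 4
    have h3 : 3 ∣ Nat.fib (Nat.gcd n 4) := by
      rw [hg]
      exact Nat.dvd_gcd h (by norm_num [show Nat.fib 4 = 3 by decide])
    have hd : Nat.gcd n 4 ∣ 4 := Nat.gcd_dvd_right n 4
    have hpos : 0 < Nat.gcd n 4 := Nat.gcd_pos_of_pos_right n (by norm_num)
    have hle : Nat.gcd n 4 ≤ 4 := Nat.le_of_dvd (by norm_num) hd
    interval_cases h : Nat.gcd n 4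
    · simp [show Nat.fib 1 = 1 by decide] at h3
    · simp [show Nat.fib 2 = 1 by decide] at h3
    · norm_num at hd
    · rw [← h]; exact Nat.gcd_dvd_left n 4
  · intro h
    obtain ⟨c, rfl⟩ := h
    have : Nat.fib 4 ∣ Nat.fib (4*c) := Nat.fib_dvd 4 (4*c) ⟨c, rfl⟩
    simpa [show Nat.fib 4 = 3 by decide] using this

private lemma fib_val (k : ℕ) :
    ∃ t, ¬ 3 ∣ t ∧ Nat.fib (4 * 3^k) = 3^(k+1) * t := by
  induction k with
  | zero => exact ⟨1, by norm_num, by decide⟩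
  | succ j ih =>
    obtain ⟨t, ht3, ht⟩ := ih
    have hodd : Odd (4 * 3^j - 1) := by
      have : 1 ≤ 4 * 3^j := Nat.one_le_iff_ne_zero.mpr (by positivity)
      refine ⟨2 * 3^j - 1, ?_⟩
      omega
    have hmk : 4 * 3^j - 1 + 1 = 4 * 3^j := by
      have : 1 ≤ 4 * 3^j := Nat.one_le_iff_ne_zero.mpr (by positivity)
      omega
    have h3 := fib_three_mul (4 * 3^j - 1) hodd
    rw [hmk] at h3
    rw [show 3 * (4 * 3^j) = 4 * 3^(j+1) by ring] at h3
    refine ⟨t * (5 * 3^(2*j+1) * t^2 + 1), ?_, ?_⟩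
    · intro hdvd
      rcases (Nat.Prime.dvd_mul (by norm_num)).mp hdvd with h | h
      · exact ht3 h
      · have : (3:ℕ) ∣ 5 * 3^(2*j+1) * t^2 := ⟨5 * 3^(2*j) * t^2, by ring⟩
        omega
    · rw [h3, ht]; ring

theorem z_three_pow (b : ℕ) (hb : 0 < b) : z (3 ^ b) = 4 * 3 ^ (b - 1) := by
  obtain ⟨k, rfl⟩ : ∃ k, b = k + 1 := ⟨b - 1, by omega⟩
  simp only [Nat.add_sub_cancel]
  obtain ⟨t, ht3, ht⟩ := fib_val k
  have hmem : (4 * 3^k) ∈ {ℓ : ℕ | 0 < ℓ ∧ 3^(k+1) ∣ Nat.fib ℓ} :=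
    ⟨by positivity, ⟨t, ht⟩⟩
  refine le_antisymm (Nat.sInf_le hmem) (le_csInf ⟨_, hmem⟩ ?_)
  rintro m ⟨hm0, hmdvd⟩
  -- show 4 * 3^k ≤ m via 4*3^k ∣ m
  have hfd : Nat.fib (Nat.gcd m (4*3^k)) = Nat.gcd (Nat.fib m) (Nat.fib (4*3^k)) :=
    Nat.fib_gcd _ _
  have h3d : 3^(k+1) ∣ Nat.fib (Nat.gcd m (4*3^k)) := by
    rw [hfd]; exact Nat.dvd_gcd hmdvd ⟨t, ht⟩
  have h4d : 4 ∣ Nat.gcd m (4*3^k) := by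
    apply (three_dvd_fib_iff _).mp
    exact dvd_trans (dvd_pow_self 3 (Nat.succ_ne_zero k)) h3d
  have hdd : Nat.gcd m (4*3^k) ∣ 4 * 3^k := Nat.gcd_dvd_right _ _
  obtain ⟨e, heq⟩ := h4d
  rw [heq] at hdd h3d
  have he : e ∣ 3^k := (mul_dvd_mul_iff_left (show (4:ℕ) ≠ 0 by norm_num)).mp hdd
  obtain ⟨c, hck, rfl⟩ := (Nat.dvd_prime_pow Nat.prime_three).mp he
  obtain ⟨s, hs3, hs⟩ := fib_val c
  rw [hs] at h3d
  have hcop : Nat.Coprime (3^(k+1)) s :=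
    (Nat.Prime.coprime_iff_not_dvd Nat.prime_three).mpr hs3 |>.pow_left _
  have hpow : (3:ℕ)^(k+1) ∣ 3^(c+1) := hcop.dvd_of_dvd_mul_right h3d
  have hkc : k + 1 ≤ c + 1 := (pow_dvd_pow_iff_le_right (by norm_num)).mp hpow
  have hck' : c = k := by omega
  subst hck'
  have : (4 * 3^c) ∣ m := heq ▸ Nat.gcd_dvd_left m _
  exact Nat.le_of_dvd hm0 this
end

section
/- For any positive integers m_1, m_2, …, m_n (n ≥ 1), z( lcm(m_1, m_2, …, m_n) ) = lcm( z(m_1), z(m_2), …, z(m_n) ). -/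
lemma fib_exists_dvd (n : ℕ) (hn : 0 < n) : ∃ ℓ, 0 < ℓ ∧ n ∣ Nat.fib ℓ := by
  haveI : NeZero n := ⟨hn.ne'⟩
  set g : ℕ → ZMod n × ZMod n :=
    fun k => ((Nat.fib k : ZMod n), (Nat.fib (k+1) : ZMod n)) with hg
  have step : ∀ i j, g (i+1) = g (j+1) → g i = g j := by
    intro i j h
    simp only [hg, Prod.mk.injEq] at h ⊢
    obtain ⟨h1, h2⟩ := h
    rw [Nat.fib_add_two, Nat.fib_add_two] at h2
    push_cast at h2
    refine ⟨?_, h1⟩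
    rw [h1] at h2
    exact add_right_cancel h2
  have down : ∀ a t, g a = g (a + t) → g 0 = g t := by
    intro a
    induction a with
    | zero => intro t h; simpa using h
    | succ a ih =>
      intro t h
      apply ih
      apply step
      convert h using 2
      omega
  obtain ⟨a, b, hab, hg'⟩ := Finite.exists_ne_map_eq_of_infinite g
  rcases hab.lt_or_gt with h | h
  · refine ⟨b - a, by omega, ?_⟩
    have := down a (b - a) (by rwa [Nat.add_sub_cancel' h.le])
    have h0 : ((Nat.fib (b - a) : ZMod n)) = 0 := by
      have := congrArg Prod.fst this
      simpa [hg] using this.symm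
    exact (ZMod.natCast_eq_zero_iff _ _).mp h0
  · refine ⟨a - b, by omega, ?_⟩
    have := down b (a - b) (by rw [Nat.add_sub_cancel' h.le]; exact hg'.symm)
    have h0 : ((Nat.fib (a - b) : ZMod n)) = 0 := by
      have := congrArg Prod.fst this
      simpa [hg] using this.symm
    exact (ZMod.natCast_eq_zero_iff _ _).mp h0

lemma z_spec (n : ℕ) (hn : 0 < n) : 0 < z n ∧ n ∣ Nat.fib (z n) :=
  Nat.sInf_mem (fib_exists_dvd n hn)

lemma dvd_fib_iff (n k : ℕ) (hn : 0 < n) : n ∣ Nat.fib k ↔ z n ∣ k := by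
  obtain ⟨hz, hdvd⟩ := z_spec n hn
  constructor
  · intro h
    have hgpos : 0 < Nat.gcd k (z n) := Nat.gcd_pos_of_pos_right _ hz
    have hng : n ∣ Nat.fib (Nat.gcd k (z n)) := by
      rw [Nat.fib_gcd]
      exact Nat.dvd_gcd h hdvd
    have h1 : z n ≤ Nat.gcd k (z n) := Nat.sInf_le ⟨hgpos, hng⟩
    have h2 : Nat.gcd k (z n) ≤ z n := Nat.le_of_dvd hz (Nat.gcd_dvd_right _ _)
    have : Nat.gcd k (z n) = z n := le_antisymm h2 h1
    rw [← this]
    exact Nat.gcd_dvd_left _ _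
  · intro h
    exact dvd_trans hdvd (Nat.fib_dvd _ _ h)

lemma z_one : z 1 = 1 := by
  apply le_antisymm
  · exact Nat.sInf_le ⟨one_pos, one_dvd _⟩
  · exact (z_spec 1 one_pos).1

lemma foldr_lcm_pos (t : List ℕ) (ht : ∀ m ∈ t, 0 < m) : 0 < t.foldr Nat.lcm 1 := by
  induction t with
  | nil => simp
  | cons b s ihs =>
    have hb : 0 < b := ht b List.mem_cons_self
    have hs : 0 < s.foldr Nat.lcm 1 := ihs (fun m hm => ht m (List.mem_cons_of_mem _ hm))
    exact Nat.pos_of_ne_zero (Nat.lcm_ne_zero hb.ne' hs.ne')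

lemma z_lcm (m n : ℕ) (hm : 0 < m) (hn : 0 < n) :
    z (Nat.lcm m n) = Nat.lcm (z m) (z n) := by
  have hl : 0 < Nat.lcm m n := Nat.pos_of_ne_zero (Nat.lcm_ne_zero hm.ne' hn.ne')
  have key : ∀ k, Nat.lcm m n ∣ Nat.fib k ↔ Nat.lcm (z m) (z n) ∣ k := by
    intro k
    rw [Nat.lcm_dvd_iff, Nat.lcm_dvd_iff, dvd_fib_iff m k hm, dvd_fib_iff n k hn]
  apply Nat.dvd_antisymm
  · rw [← dvd_fib_iff _ _ hl, key]
  · rw [← key]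
    exact (z_spec _ hl).2

theorem z_lcm_list (l : List ℕ) (hl : l ≠ []) (hpos : ∀ m ∈ l, 0 < m) :
    z (l.foldr Nat.lcm 1) = (l.map z).foldr Nat.lcm 1 := by
  clear hl
  induction l with
  | nil => simpa using z_one
  | cons a t ih =>
    have ha : 0 < a := hpos a List.mem_cons_self
    have ht : ∀ m ∈ t, 0 < m := fun m hm => hpos m (List.mem_cons_of_mem _ hm)
    have htpos : 0 < t.foldr Nat.lcm 1 := foldr_lcm_pos t ht
    simp only [List.foldr_cons, List.map_cons]
    rw [z_lcm a _ ha htpos, ih ht]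
end

section
/- Let p be an odd prime and e a positive integer, and let a be the exact power of p dividing F_{z(p)} (i.e., a is the p-adic valuation of F_{z(p)}); then a ≥ 1 and z(p^e) = p^{max(e - a, 0)}·z(p). -/
open Nat Finset in
private def Amat : Matrix (Fin 2) (Fin 2) ℤ := !![1,1;1,0]

open Nat Finset

private lemma Amat_sq : Amat * Amat = Amat + 1 := by
  ext i j
  fin_cases i <;> fin_cases j <;> simp [Amat, Matrix.mul_apply, Fin.sum_univ_two, Matrix.one_apply]

private lemma Amat_pow (j : ℕ) : Amat ^ (j+1) = (fib (j+1) : ℤ) • Amat + (fib j : ℤ) • 1 := by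
  induction j with
  | zero => simp
  | succ n ih =>
    rw [pow_succ, ih, add_mul, smul_mul_assoc, smul_mul_assoc, Amat_sq, one_mul, fib_add_two]
    push_cast
    module

private lemma Amat_entry (n : ℕ) : (Amat ^ n) 0 1 = (fib n : ℤ) := by
  cases n with
  | zero => simp [Matrix.one_apply]
  | succ j =>
      rw [Amat_pow]
      simp [Amat, Matrix.one_apply, Matrix.add_apply, Matrix.smul_apply,
        ← Matrix.diagonal_natCast, Matrix.diagonal_apply]

private lemma fib_mul_int (m k : ℕ) (hk : 1 ≤ k) :
    (fib (m * k) : ℤ) = ∑ i ∈ range (m+1),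
      (m.choose i : ℤ) * (fib k : ℤ) ^ i * (fib (k-1) : ℤ) ^ (m-i) * (fib i : ℤ) := by
  obtain ⟨j, rfl⟩ : ∃ j, k = j + 1 := ⟨k - 1, by omega⟩
  have hc : Commute ((fib (j+1) : ℤ) • Amat) ((fib j : ℤ) • 1) :=
    ((Commute.one_right Amat).smul_left _).smul_right _
  have h1 : Amat ^ (m * (j+1)) = ((fib (j+1) : ℤ) • Amat + (fib j : ℤ) • 1) ^ m := by
    rw [← Amat_pow, ← pow_mul, mul_comm]
  rw [hc.add_pow] at h1
  have h2 := congrFun (congrFun h1 0) 1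
  rw [Amat_entry] at h2
  rw [h2, Matrix.sum_apply]
  apply Finset.sum_congr rfl
  intro i hi
  simp only [smul_pow, one_pow, smul_mul_assoc, mul_smul_comm, Matrix.smul_apply,
    smul_eq_mul, mul_one, Matrix.mul_apply, ← Matrix.diagonal_natCast,
    Matrix.diagonal_apply, Fin.sum_univ_two, Amat_entry]
  simp [Amat_entry]
  ring

private lemma fib_mul_nat (m k : ℕ) (hk : 1 ≤ k) :
    fib (m * k) = ∑ i ∈ range (m+1),
      m.choose i * fib k ^ i * fib (k-1) ^ (m-i) * fib i := by
  have h := fib_mul_int m k hk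
  have h2 : ((∑ i ∈ range (m+1),
      m.choose i * fib k ^ i * fib (k-1) ^ (m-i) * fib i : ℕ) : ℤ)
      = ∑ i ∈ range (m+1),
      (m.choose i : ℤ) * (fib k : ℤ) ^ i * (fib (k-1) : ℤ) ^ (m-i) * (fib i : ℤ) := by
    push_cast; ring
  exact_mod_cast h.trans h2.symm

private lemma fib_mul_split (m k : ℕ) (hk : 1 ≤ k) (hm : 1 ≤ m) :
    fib (m * k) = m * fib k * fib (k-1) ^ (m-1)
      + ∑ i ∈ range (m-1), (m.choose (i+2)) * fib k ^ (i+2) * fib (k-1) ^ (m-(i+2)) * fib (i+2) := by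
  obtain ⟨m', rfl⟩ : ∃ m', m = m' + 1 := ⟨m - 1, by omega⟩
  rw [fib_mul_nat _ _ hk, Finset.sum_range_succ', Finset.sum_range_succ']
  simp [Nat.choose_one_right]
  ring

private lemma three_pow_bound (w : ℕ) (hw : 1 ≤ w) : w + 2 ≤ 3 ^ w := by
  induction w with
  | zero => omega
  | succ n ih =>
    rcases Nat.eq_zero_or_pos n with rfl | hn
    · norm_num
    · have := ih hn
      have : 3 ^ (n+1) = 3 * 3 ^ n := by ring
      omega

private lemma fib_lte (p k m : ℕ) (hp : p.Prime) (hp3 : 3 ≤ p) (hk : 2 ≤ k)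
    (hdvd : p ∣ fib k) (hm : 0 < m) :
    (fib (m * k)).factorization p = (fib k).factorization p + m.factorization p := by
  set a := (fib k).factorization p with ha_def
  set v := m.factorization p with hv_def
  have hx0 : fib k ≠ 0 := (Nat.fib_pos.mpr (by omega)).ne'
  have hy0 : fib (k-1) ≠ 0 := (Nat.fib_pos.mpr (by omega)).ne'
  have ha1 : 1 ≤ a := hp.factorization_pos_of_dvd hx0 hdvd
  have hy : ¬ p ∣ fib (k-1) := by
    intro hyd
    have hcop := fib_coprime_fib_succ (k-1)
    rw [Nat.sub_add_cancel (by omega)] at hcop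
    have h1 : p ∣ 1 := hcop ▸ Nat.dvd_gcd hyd hdvd
    have := Nat.le_of_dvd one_pos h1
    have := hp.two_le
    omega
  have hterm : ∀ i ∈ range (m-1),
      p ^ (v + a + 1) ∣ m.choose (i+2) * fib k ^ (i+2) * fib (k-1) ^ (m-(i+2)) * fib (i+2) := by
    intro i _
    set j := i + 2 with hj_def
    have hj : 2 ≤ j := by omega
    rcases Nat.eq_zero_or_pos (m.choose j) with hc0 | hcpos
    · simp [hc0]
    set c := (m.choose j).factorization p with hc_def
    set w := j.factorization p with hw_def
    have key : m * (m-1).choose (j-1) = m.choose j * j := by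
      have := Nat.add_one_mul_choose_eq (m-1) (j-1)
      have e1 : m-1+1 = m := by omega
      have e2 : j-1+1 = j := by omega
      rwa [e1, e2] at this
    have hch0 : (m-1).choose (j-1) ≠ 0 := by
      intro h0
      rw [h0, Nat.mul_zero] at key
      exact (Nat.mul_ne_zero hcpos.ne' (by omega)) key.symm
    have hvc : v ≤ w + c := by
      have hfac := congrArg (fun t => t.factorization p) key
      simp only [Nat.factorization_mul hm.ne' hch0, Nat.factorization_mul hcpos.ne' (by omega : j ≠ 0),
        Finsupp.add_apply] at hfac
      omega
    have harith : v + a + 1 ≤ c + j * a := by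
      have hpw : p ^ w ≤ j := Nat.le_of_dvd (by omega) (Nat.ordProj_dvd j p)
      rcases Nat.eq_zero_or_pos w with hw0 | hw1
      · nlinarith
      · have h3 : 3 ^ w ≤ p ^ w := Nat.pow_le_pow_left hp3 w
        have hb := three_pow_bound w hw1
        nlinarith
    calc p ^ (v + a + 1) ∣ p ^ (c + j * a) := pow_dvd_pow p harith
      _ = p ^ c * (p ^ a) ^ j := by rw [pow_add, pow_mul']
      _ ∣ m.choose j * fib k ^ j :=
          mul_dvd_mul (Nat.ordProj_dvd _ _) (pow_dvd_pow_of_dvd (Nat.ordProj_dvd _ _) j)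
      _ ∣ _ := ⟨fib (k-1) ^ (m-j) * fib j, by ring⟩
  obtain ⟨R, hR⟩ := Finset.dvd_sum hterm
  have hEq := fib_mul_split m k (by omega) hm
  rw [hR] at hEq
  set T := m * fib k * fib (k-1) ^ (m-1) with hT_def
  have hT0 : T ≠ 0 := by positivity
  have hT : T.factorization p = v + a := by
    rw [hT_def, Nat.factorization_mul (Nat.mul_ne_zero hm.ne' hx0) (pow_ne_zero _ hy0),
      Nat.factorization_mul hm.ne' hx0, Nat.factorization_pow]
    simp [Nat.factorization_eq_zero_of_not_dvd hy]
    omega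
  have hfib0 : fib (m * k) ≠ 0 := (Nat.fib_pos.mpr (by positivity)).ne'
  have le1 : p ^ (v + a) ∣ fib (m * k) := by
    rw [hEq]
    exact dvd_add ((hp.pow_dvd_iff_le_factorization hT0).mpr (le_of_eq hT.symm))
      (dvd_trans (pow_dvd_pow p (by omega)) (dvd_mul_right _ R))
  have le2 : ¬ p ^ (v + a + 1) ∣ fib (m * k) := by
    intro h
    have hTd : p ^ (v + a + 1) ∣ T := by
      have hsub : T = fib (m * k) - p ^ (v + a + 1) * R := by omega
      rw [hsub]
      exact Nat.dvd_sub h (dvd_mul_right _ R)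
    have := (hp.pow_dvd_iff_le_factorization hT0).mp hTd
    omega
  have h1 := (hp.pow_dvd_iff_le_factorization hfib0).mp le1
  have h2 : ¬ (v + a + 1 ≤ (fib (m * k)).factorization p) :=
    fun h => le2 ((hp.pow_dvd_iff_le_factorization hfib0).mpr h)
  omega

private lemma fib_back (n d : ℕ) :
    ∀ i, ((fib (i+d) : ZMod n) = fib i ∧ (fib (i+d+1) : ZMod n) = fib (i+1)) → n ∣ fib d := by
  intro i
  induction i with
  | zero =>
    rintro ⟨h1, -⟩
    simp only [Nat.zero_add, fib_zero, Nat.cast_zero] at h1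
    exact (ZMod.natCast_eq_zero_iff _ _).mp h1
  | succ i ih =>
    rintro ⟨h1, h2⟩
    apply ih
    constructor
    · have e1 : (fib (i+d+2) : ZMod n) = fib (i+d) + fib (i+d+1) := by
        rw [show i+d+2 = (i+d)+2 from rfl, fib_add_two]; push_cast; ring
      have e2 : (fib (i+2) : ZMod n) = fib i + fib (i+1) := by
        rw [fib_add_two]; push_cast; ring
      have h1' : (fib (i+d+2) : ZMod n) = fib (i+2) := by
        have e : i+1+d+1 = i+d+2 := by ring
        rwa [e] at h2
      have h2' : (fib (i+d+1) : ZMod n) = fib (i+1) := by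
        have e : i+1+d = i+d+1 := by ring
        rwa [e] at h1
      rw [e1, e2, h2'] at h1'
      exact add_right_cancel h1'
    · have e : i+1+d = i+d+1 := by ring
      rwa [e] at h1

private lemma exists_fib_dvd (n : ℕ) (hn : 0 < n) : ∃ ℓ, 0 < ℓ ∧ n ∣ fib ℓ := by
  haveI : NeZero n := ⟨hn.ne'⟩
  obtain ⟨x, y, hne, hxy⟩ :=
    Finite.exists_ne_map_eq_of_infinite (fun j : ℕ => ((fib j : ZMod n), (fib (j+1) : ZMod n)))
  rcases hne.lt_or_gt with h | h
  · refine ⟨y - x, by omega, fib_back n (y-x) x ⟨?_, ?_⟩⟩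
    · rw [show x + (y-x) = y by omega]; exact (Prod.mk.injEq _ _ _ _ ▸ hxy.symm : _ ∧ _).1
    · rw [show x + (y-x) + 1 = y + 1 by omega]; exact (Prod.mk.injEq _ _ _ _ ▸ hxy.symm : _ ∧ _).2
  · refine ⟨x - y, by omega, fib_back n (x-y) y ⟨?_, ?_⟩⟩
    · rw [show y + (x-y) = x by omega]; exact (Prod.mk.injEq _ _ _ _ ▸ hxy : _ ∧ _).1
    · rw [show y + (x-y) + 1 = x + 1 by omega]; exact (Prod.mk.injEq _ _ _ _ ▸ hxy : _ ∧ _).2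

private lemma z_mem (n : ℕ) (hn : 0 < n) : 0 < z n ∧ n ∣ fib (z n) :=
  Nat.sInf_mem (s := {ℓ : ℕ | 0 < ℓ ∧ n ∣ Nat.fib ℓ}) (exists_fib_dvd n hn)

private lemma z_dvd (n ℓ : ℕ) (hn : 0 < n) (hl : 0 < ℓ) (h : n ∣ fib ℓ) : z n ∣ ℓ := by
  obtain ⟨hz, hzd⟩ := z_mem n hn
  have hg : n ∣ fib (Nat.gcd (z n) ℓ) := by rw [fib_gcd]; exact Nat.dvd_gcd hzd h
  have hgpos : 0 < Nat.gcd (z n) ℓ := Nat.gcd_pos_of_pos_right _ hl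
  have h1 : z n ≤ Nat.gcd (z n) ℓ := Nat.sInf_le ⟨hgpos, hg⟩
  have h2 : Nat.gcd (z n) ℓ ≤ z n := Nat.gcd_le_left _ hz
  have he : Nat.gcd (z n) ℓ = z n := le_antisymm h2 h1
  exact he ▸ Nat.gcd_dvd_right _ _

theorem z_prime_pow_valuation (p e : ℕ) (hp : p.Prime) (hodd : Odd p)
    (he : 0 < e) :
    1 ≤ (Nat.fib (z p)).factorization p ∧
      z (p ^ e) = p ^ (max (e - (Nat.fib (z p)).factorization p) 0) * z p := by
  have hp2 := hp.two_le
  have hp3 : 3 ≤ p := by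
    obtain ⟨t, ht⟩ := hodd; omega
  obtain ⟨hk, hpk⟩ := z_mem p (by omega)
  set k := z p with hk_def
  set a := (fib k).factorization p with ha_def
  have hx0 : fib k ≠ 0 := (Nat.fib_pos.mpr hk).ne'
  have ha1 : 1 ≤ a := hp.factorization_pos_of_dvd hx0 hpk
  have hk2 : 2 ≤ k := by
    by_contra h
    have hk1 : k = 1 := by omega
    rw [hk1, fib_one] at hpk
    have := Nat.le_of_dvd one_pos hpk
    omega
  refine ⟨ha1, ?_⟩
  rw [show max (e - a) 0 = e - a from max_eq_left (Nat.zero_le _)]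
  have hppos : 0 < p := by omega
  have hpe0 : 0 < p ^ e := pow_pos hppos e
  have hLpos : 0 < p ^ (e - a) * k := by positivity
  have hLdvd : p ^ e ∣ fib (p ^ (e - a) * k) := by
    have hfl := fib_lte p k (p ^ (e - a)) hp hp3 hk2 hpk (pow_pos hppos _)
    have hppow : (p ^ (e - a)).factorization p = e - a := by
      rw [hp.factorization_pow]; simp
    rw [hppow] at hfl
    have hf0 : fib (p ^ (e - a) * k) ≠ 0 := (Nat.fib_pos.mpr hLpos).ne'
    exact (hp.pow_dvd_iff_le_factorization hf0).mpr (by omega)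
  apply le_antisymm
  · exact Nat.sInf_le ⟨hLpos, hLdvd⟩
  · obtain ⟨hzpos, hzdvd⟩ := z_mem (p ^ e) hpe0
    have hpdvd : p ∣ fib (z (p ^ e)) := dvd_trans (dvd_pow_self p he.ne') hzdvd
    have hkdvd : k ∣ z (p ^ e) := z_dvd p _ (by omega) hzpos hpdvd
    obtain ⟨m, hmeq⟩ := hkdvd
    have hm : 0 < m := by
      rcases Nat.eq_zero_or_pos m with rfl | h
      · rw [hmeq, Nat.mul_zero] at hzpos; omega
      · exact h
    have hfac := fib_lte p k m hp hp3 hk2 hpk hm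
    have hfib0 : fib (m * k) ≠ 0 := (Nat.fib_pos.mpr (by positivity)).ne'
    have hge : e ≤ a + m.factorization p := by
      have hdv := (hp.pow_dvd_iff_le_factorization (by rw [hmeq, mul_comm k m]; exact hfib0)).mp hzdvd
      rw [hmeq, mul_comm k m, hfac] at hdv
      omega
    have hmd : p ^ (e - a) ∣ m :=
      (hp.pow_dvd_iff_le_factorization hm.ne').mpr (by omega)
    obtain ⟨t, rfl⟩ := hmd
    have ht : 0 < t := by
      rcases Nat.eq_zero_or_pos t with rfl | h
      · simp at hm
      · exact h
    calc p ^ (e - a) * k ≤ p ^ (e - a) * k * t := Nat.le_mul_of_pos_right _ ht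
      _ = z (p ^ e) := by rw [hmeq]; ring
end

section
/- For all integers k ≥ 1 and m ≥ 4 with 2k + 2 ≤ m, z^k(10^m) = 3·5^m·2^{m-2k}. -/
open Nat


lemma fib_step {M P : ℕ} (h0 : M ∣ fib P) (h1 : fib (P+1) ≡ 1 [MOD M]) (m : ℕ) :
    fib (P + m) ≡ fib m [MOD M] := by
  rcases Nat.eq_zero_or_pos m with rfl | hm
  · simpa using (Nat.modEq_zero_iff_dvd).mpr h0
  · obtain ⟨m', rfl⟩ : ∃ m', m = m' + 1 := ⟨m - 1, by omega⟩
    have e := Nat.fib_add P m'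
    calc fib (P + (m' + 1)) = fib P * fib m' + fib (P+1) * fib (m'+1) := by
          rw [show P + (m' + 1) = P + m' + 1 from by omega]; exact e
      _ ≡ 0 * fib m' + 1 * fib (m'+1) [MOD M] :=
          Nat.ModEq.add (Nat.ModEq.mul ((Nat.modEq_zero_iff_dvd).mpr h0) (Nat.ModEq.refl _))
            (Nat.ModEq.mul h1 (Nat.ModEq.refl _))
      _ = fib (m'+1) := by ring

lemma fib_mod_period {M P : ℕ} (hP : 0 < P) (h0 : M ∣ fib P) (h1 : fib (P+1) ≡ 1 [MOD M]) :
    ∀ ℓ, fib ℓ ≡ fib (ℓ % P) [MOD M] := by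
  intro ℓ
  induction ℓ using Nat.strong_induction_on with
  | _ ℓ ih =>
    rcases lt_or_ge ℓ P with h | h
    · rw [Nat.mod_eq_of_lt h]
    · obtain ⟨m, rfl⟩ : ∃ m, ℓ = P + m := ⟨ℓ - P, by omega⟩
      have h2 : (P + m) % P = m % P := by simp [Nat.add_mod_left]
      rw [h2]
      exact (fib_step h0 h1 m).trans (ih m (by omega))

lemma fib_dvd_iff_of_period {M P d : ℕ} (hP : 0 < P) (h0 : M ∣ fib P)
    (h1 : fib (P+1) ≡ 1 [MOD M]) (hd : d ∣ P)
    (hchk : ∀ r, r < P → (fib r % M = 0 ↔ r % d = 0)) (ℓ : ℕ) :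
    M ∣ fib ℓ ↔ d ∣ ℓ := by
  have hper := fib_mod_period hP h0 h1 ℓ
  rw [Nat.dvd_iff_mod_eq_zero, Nat.dvd_iff_mod_eq_zero]
  have : fib ℓ % M = fib (ℓ % P) % M := hper
  rw [this, hchk _ (Nat.mod_lt _ hP), Nat.mod_mod_of_dvd _ hd]

lemma dvd8_fib (ℓ : ℕ) : 8 ∣ fib ℓ ↔ 6 ∣ ℓ :=
  fib_dvd_iff_of_period (P := 12) (by norm_num) (by decide) (by decide) (by norm_num)
    (by decide) ℓ

lemma dvd4_fib (ℓ : ℕ) : 4 ∣ fib ℓ ↔ 6 ∣ ℓ :=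
  fib_dvd_iff_of_period (P := 6) (by norm_num) (by decide) (by decide) (by norm_num)
    (by decide) ℓ

lemma dvd3_fib (ℓ : ℕ) : 3 ∣ fib ℓ ↔ 4 ∣ ℓ :=
  fib_dvd_iff_of_period (P := 8) (by norm_num) (by decide) (by decide) (by norm_num)
    (by decide) ℓ

lemma dvd5_fib (ℓ : ℕ) : 5 ∣ fib ℓ ↔ 5 ∣ ℓ :=
  fib_dvd_iff_of_period (P := 20) (by norm_num) (by decide) (by decide) (by norm_num)
    (by decide) ℓ

lemma fib_add_int (p q : ℕ) :
    (fib (p + q) : ℤ) = fib p * fib (q + 1) + ((fib (p+1) : ℤ) - fib p) * fib q := by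
  induction q using Nat.strong_induction_on with
  | _ q ih =>
    match q with
    | 0 => simp
    | 1 => rw [Nat.fib_add_two]; push_cast; ring
    | (q+2) =>
      have h1 := ih q (by omega)
      have h2 := ih (q+1) (by omega)
      have e1 : p + (q + 2) = (p + q) + 2 := by omega
      rw [e1, Nat.fib_add_two]
      rw [show p + q + 1 = p + (q+1) from by omega]
      push_cast
      rw [h1, h2, Nat.fib_add_two (n := q+1), Nat.fib_add_two (n := q)]
      push_cast
      ring

lemma fib_sq_between (n : ℕ) : (fib (n+2) : ℤ) = (fib n : ℤ) + fib (n+1) := by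
  rw [Nat.fib_add_two]; push_cast; ring

lemma fib_five_mul (n : ℕ) :
    (fib (5 * n) : ℤ) = (fib n : ℤ) *
      (25 * (fib n : ℤ)^4
        + 25 * ((fib (n+1) : ℤ)^2 - (fib (n+1) : ℤ) * fib n - (fib n : ℤ)^2) * (fib n : ℤ)^2
        + 5 * ((fib (n+1) : ℤ)^2 - (fib (n+1) : ℤ) * fib n - (fib n : ℤ)^2)^2) := by
  have a2 : (fib (n*2) : ℤ) = (fib n : ℤ) * fib (n+1)
      + ((fib (n+1) : ℤ) - fib n) * fib n := by
    rw [show n*2 = n + n from by ring, fib_add_int]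
  have b2 : (fib (n*2+1) : ℤ) = (fib (n+1) : ℤ) * fib (n+1) + (fib n : ℤ) * fib n := by
    rw [show n*2+1 = (n+1) + n from by ring, fib_add_int,
      show (n+1)+1 = n+2 from rfl, fib_sq_between]
    ring
  have a3 : (fib (n*3) : ℤ) = (fib (n*2) : ℤ) * fib (n+1)
      + ((fib (n*2+1) : ℤ) - fib (n*2)) * fib n := by
    rw [show n*3 = n*2 + n from by ring, fib_add_int]
  have b3 : (fib (n*3+1) : ℤ) = (fib (n*2+1) : ℤ) * fib (n+1) + (fib (n*2) : ℤ) * fib n := by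
    rw [show n*3+1 = (n*2+1) + n from by ring, fib_add_int,
      show (n*2+1)+1 = n*2+2 from rfl, fib_sq_between]
    ring
  have a4 : (fib (n*4) : ℤ) = (fib (n*3) : ℤ) * fib (n+1)
      + ((fib (n*3+1) : ℤ) - fib (n*3)) * fib n := by
    rw [show n*4 = n*3 + n from by ring, fib_add_int]
  have b4 : (fib (n*4+1) : ℤ) = (fib (n*3+1) : ℤ) * fib (n+1) + (fib (n*3) : ℤ) * fib n := by
    rw [show n*4+1 = (n*3+1) + n from by ring, fib_add_int,
      show (n*3+1)+1 = n*3+2 from rfl, fib_sq_between]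
    ring
  have a5 : (fib (5*n) : ℤ) = (fib (n*4) : ℤ) * fib (n+1)
      + ((fib (n*4+1) : ℤ) - fib (n*4)) * fib n := by
    rw [show 5*n = n*4 + n from by ring, fib_add_int]
  rw [a5, a4, b4, a3, b3, a2, b2]
  ring

lemma fib_mul_rep (n : ℕ) : ∀ t : ℕ, ∃ c d : ℤ,
    (fib (n*(t+1)) : ℤ) = (t+1) * fib n * (fib (n+1) : ℤ)^t + (fib n : ℤ)^2 * c ∧
    (fib (n*(t+1)+1) : ℤ) = (fib (n+1) : ℤ)^(t+1) + (fib n : ℤ)^2 * d := by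
  intro t
  induction t with
  | zero =>
    refine ⟨0, 0, ?_, ?_⟩ <;> rw [Nat.mul_one] <;> push_cast <;> ring
  | succ t ih =>
    obtain ⟨c, d, hA, hB⟩ := ih
    set x : ℤ := (fib n : ℤ) with hx
    set y : ℤ := (fib (n+1) : ℤ) with hy
    refine ⟨c*y + x*d - (t+1)*y^t - x*c, d*y + (t+1)*y^t + x*c, ?_, ?_⟩
    · have e : (fib (n*(t+2)) : ℤ) = (fib (n*(t+1)) : ℤ) * y
          + ((fib (n*(t+1)+1) : ℤ) - fib (n*(t+1))) * x := by
        rw [show n*(t+2) = n*(t+1) + n from by ring, fib_add_int]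
      rw [e, hA, hB]
      push_cast
      ring
    · have e : (fib (n*(t+2)+1) : ℤ) = (fib (n*(t+1)+1) : ℤ) * y
          + (fib (n*(t+1)) : ℤ) * x := by
        rw [show n*(t+2)+1 = (n*(t+1)+1) + n from by ring, fib_add_int,
          show n*(t+1)+1+1 = n*(t+1)+2 from rfl, fib_sq_between]
        ring
      rw [e, hA, hB]
      push_cast
      ring

lemma prime_five_int : Prime (5 : ℤ) := by norm_num

lemma five_not_dvd_fib_succ {n : ℕ} (hn : 5 ∣ fib n) : ¬ (5 ∣ fib (n+1)) := by
  intro h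
  have := Nat.fib_coprime_fib_succ n
  have : 5 ∣ Nat.gcd (fib n) (fib (n+1)) := Nat.dvd_gcd hn h
  rw [Nat.fib_coprime_fib_succ n] at this
  omega

lemma five_mul_step {n : ℕ} (hn : 5 ∣ fib n) :
    ∃ v : ℤ, (fib (5*n) : ℤ) = 5 * (fib n : ℤ) * v ∧ ¬ (5:ℤ) ∣ v := by
  refine ⟨5*(fib n:ℤ)^4 + 5*((fib (n+1):ℤ)^2 - (fib (n+1):ℤ)*(fib n:ℤ) - (fib n:ℤ)^2)*(fib n:ℤ)^2
    + ((fib (n+1):ℤ)^2 - (fib (n+1):ℤ)*(fib n:ℤ) - (fib n:ℤ)^2)^2, ?_, ?_⟩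
  · rw [fib_five_mul]; ring
  · intro h5v
    have h5x : (5:ℤ) ∣ (fib n : ℤ) := Int.natCast_dvd_natCast.mpr hn
    have hE2 : (5:ℤ) ∣ ((fib (n+1):ℤ)^2 - (fib (n+1):ℤ)*(fib n:ℤ) - (fib n:ℤ)^2)^2 := by
      obtain ⟨c, hc⟩ := h5v
      refine ⟨c - ((fib n:ℤ)^4 + ((fib (n+1):ℤ)^2 - (fib (n+1):ℤ)*(fib n:ℤ) - (fib n:ℤ)^2)*(fib n:ℤ)^2), ?_⟩
      linarith [hc]
    have hE : (5:ℤ) ∣ ((fib (n+1):ℤ)^2 - (fib (n+1):ℤ)*(fib n:ℤ) - (fib n:ℤ)^2) :=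
      prime_five_int.dvd_of_dvd_pow hE2
    have hy2 : (5:ℤ) ∣ (fib (n+1):ℤ)^2 := by
      obtain ⟨c, hc⟩ := hE
      obtain ⟨d, hd⟩ := h5x
      refine ⟨c + (fib (n+1):ℤ)*d + 5*d^2, ?_⟩
      nlinarith [hc, hd]
    have h5y : (5:ℤ) ∣ (fib (n+1):ℤ) := prime_five_int.dvd_of_dvd_pow hy2
    exact five_not_dvd_fib_succ hn (Int.natCast_dvd_natCast.mp (by exact_mod_cast h5y))

lemma fib_five_pow_exact : ∀ a : ℕ, 1 ≤ a → ∃ u : ℕ, fib (5^a) = 5^a * u ∧ ¬ 5 ∣ u := by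
  intro a ha
  induction a, ha using Nat.le_induction with
  | base => exact ⟨1, by decide, by decide⟩
  | succ a ha ih =>
    obtain ⟨u, hu, hu5⟩ := ih
    have h5n : 5 ∣ fib (5^a) := by
      rw [hu]
      exact Dvd.dvd.mul_right (dvd_pow_self 5 (by omega)) u
    obtain ⟨v, hv, hv5⟩ := five_mul_step h5n
    have hz : (fib (5^(a+1)) : ℤ) = (5:ℤ)^(a+1) * ((u:ℤ)*v) := by
      rw [show (5:ℕ)^(a+1) = 5 * 5^a from by ring, hv, hu]
      push_cast
      ring
    have h0 : (0:ℤ) ≤ (u:ℤ)*v := by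
      have h1 : (0:ℤ) ≤ (5:ℤ)^(a+1) * ((u:ℤ)*v) := hz ▸ Int.natCast_nonneg _
      nlinarith [pow_pos (show (0:ℤ) < 5 by norm_num) (a+1)]
    refine ⟨((u:ℤ)*v).toNat, ?_, ?_⟩
    · have : (↑(fib (5^(a+1))) : ℤ) = ((5^(a+1) * ((u:ℤ)*v).toNat : ℕ) : ℤ) := by
        push_cast [Int.toNat_of_nonneg h0]
        linear_combination hz
      exact_mod_cast this
    · intro h5w
      have : (5:ℤ) ∣ (u:ℤ)*v := by
        have := Int.natCast_dvd_natCast.mpr h5w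
        rwa [Int.toNat_of_nonneg h0] at this
        
      rcases prime_five_int.dvd_mul.mp this with h | h
      · exact hu5 (by exact_mod_cast h)
      · exact hv5 h

lemma dvd_five_pow_fib : ∀ a : ℕ, 1 ≤ a → ∀ ℓ : ℕ, (5^a ∣ fib ℓ ↔ 5^a ∣ ℓ) := by
  intro a ha
  induction a, ha using Nat.le_induction with
  | base => intro ℓ; simpa using dvd5_fib ℓ
  | succ a ha ih =>
    intro ℓ
    constructor
    · intro h
      rcases Nat.eq_zero_or_pos ℓ with rfl | hℓ
      · exact dvd_zero _
      have h5a : 5^a ∣ ℓ := (ih ℓ).mp (dvd_trans (pow_dvd_pow 5 (by omega)) h)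
      obtain ⟨t, rfl⟩ := h5a
      have ht : 0 < t := by by_contra hc; push_neg at hc; interval_cases t <;> omega
      obtain ⟨t', rfl⟩ : ∃ t', t = t' + 1 := ⟨t - 1, by omega⟩
      obtain ⟨u, hu, hu5⟩ := fib_five_pow_exact a ha
      obtain ⟨c, d, hA, _⟩ := fib_mul_rep (5^a) t'
      -- 5^(a+1) ∣ fib (5^a*(t'+1)) in ℤ
      have hdvdZ : ((5:ℤ))^(a+1) ∣ (fib (5^a*(t'+1)) : ℤ) := by
        exact_mod_cast Int.natCast_dvd_natCast.mpr h
      rw [hA] at hdvdZ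
      have hx2 : ((5:ℤ))^(a+1) ∣ ((fib (5^a) : ℤ))^2 * c := by
        have : ((fib (5^a) : ℤ))^2 = (5:ℤ)^(2*a) * (u:ℤ)^2 := by
          rw [hu]; push_cast; ring
        rw [this]
        exact Dvd.dvd.mul_right (Dvd.dvd.mul_right (pow_dvd_pow 5 (by omega)) _) c
      have hmain : ((5:ℤ))^(a+1) ∣ ((t':ℤ)+1) * (fib (5^a) : ℤ) * (fib (5^a+1) : ℤ)^t' := by
        have := dvd_sub hdvdZ hx2
        simpa using this
      have hx : (fib (5^a) : ℤ) = (5:ℤ)^a * (u:ℤ) := by rw [hu]; push_cast; ring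
      have hmain2 : (5:ℤ) ∣ ((t':ℤ)+1) * (u:ℤ) * (fib (5^a+1) : ℤ)^t' := by
        have h1 : ((5:ℤ))^a * 5 ∣ (5:ℤ)^a * (((t':ℤ)+1) * (u:ℤ) * (fib (5^a+1) : ℤ)^t') := by
          rw [← pow_succ]
          convert hmain using 1
          rw [hx]; ring
        exact (mul_dvd_mul_iff_left (a := (5:ℤ)^a) (pow_ne_zero a (by norm_num))).mp h1
      have h5fib : 5 ∣ fib (5^a) := by
        rw [hu]; exact Dvd.dvd.mul_right (dvd_pow_self 5 (by omega)) u
      have h5y : ¬ (5:ℤ) ∣ (fib (5^a+1) : ℤ) := by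
        exact fun hh => five_not_dvd_fib_succ h5fib (by exact_mod_cast hh)
      have h5t : (5:ℤ) ∣ ((t':ℤ)+1) := by
        rcases prime_five_int.dvd_mul.mp hmain2 with h' | h'
        · rcases prime_five_int.dvd_mul.mp h' with h'' | h''
          · exact h''
          · exact absurd (by exact_mod_cast h'') hu5
        · exact absurd (prime_five_int.dvd_of_dvd_pow h') h5y
      have h5tn : 5 ∣ (t' + 1) := by exact_mod_cast h5t
      obtain ⟨s, hs⟩ := h5tn
      exact ⟨s, by rw [hs, pow_succ]; ring⟩
    · intro h
      obtain ⟨u, hu, _⟩ := fib_five_pow_exact (a+1) (by omega)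
      exact dvd_trans (by rw [hu]; exact Dvd.dvd.mul_right dvd_rfl u) (Nat.fib_dvd _ _ h)

lemma fib_per8 (s : ℕ) : fib s % 8 = fib (s % 12) % 8 :=
  fib_mod_period (by norm_num) (by decide) (by decide) s

lemma fib_le_two_succ (s : ℕ) : fib s ≤ 2 * fib (s+1) := by
  have h : fib s ≤ fib (s+1) := Nat.fib_mono (by omega)
  omega

lemma lucas_even {s : ℕ} (h6 : 6 ∣ s) : (2 * fib (s+1) - fib s) % 8 = 2 := by
  have hx := fib_per8 s
  have hy := fib_per8 (s+1)
  have hle := fib_le_two_succ s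
  have h12 : s % 12 = 0 ∨ s % 12 = 6 := by omega
  rcases h12 with h | h
  · have h1 : (s+1) % 12 = 1 := by omega
    rw [h] at hx; rw [h1] at hy
    have e1 : fib 0 % 8 = 0 := by decide
    have e2 : fib 1 % 8 = 1 := by decide
    omega
  · have h1 : (s+1) % 12 = 7 := by omega
    rw [h] at hx; rw [h1] at hy
    have e1 : fib 6 % 8 = 0 := by decide
    have e2 : fib 7 % 8 = 5 := by decide
    omega

lemma lucas_odd {s : ℕ} (h6 : s % 6 = 3) :
    fib s % 4 = 2 ∧ (2 * fib (s+1) - fib s) % 8 = 4 := by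
  have hx := fib_per8 s
  have hy := fib_per8 (s+1)
  have hle := fib_le_two_succ s
  have h12 : s % 12 = 3 ∨ s % 12 = 9 := by omega
  rcases h12 with h | h
  · have h1 : (s+1) % 12 = 4 := by omega
    rw [h] at hx; rw [h1] at hy
    have e1 : fib 3 % 8 = 2 := by decide
    have e2 : fib 4 % 8 = 3 := by decide
    omega
  · have h1 : (s+1) % 12 = 10 := by omega
    rw [h] at hx; rw [h1] at hy
    have e1 : fib 9 % 8 = 2 := by decide
    have e2 : fib 10 % 8 = 7 := by decide
    omega

lemma dvd_two_pow_fib : ∀ a : ℕ, 3 ≤ a → ∀ ℓ : ℕ, (2^a ∣ fib ℓ ↔ 3 * 2^(a-2) ∣ ℓ) := by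
  intro a ha
  induction a, ha using Nat.le_induction with
  | base => intro ℓ; simpa using dvd8_fib ℓ
  | succ a ha ih =>
    intro ℓ
    constructor
    · intro h
      have h8 : 8 ∣ fib ℓ := dvd_trans (by
        have := pow_dvd_pow 2 (show 3 ≤ a+1 by omega)
        simpa using this) h
      have h6 : 6 ∣ ℓ := (dvd8_fib ℓ).mp h8
      obtain ⟨s, rfl⟩ : ∃ s, ℓ = 2 * s := ⟨ℓ / 2, by omega⟩
      have h3s : 3 ∣ s := by omega
      have hfib : fib (2*s) = fib s * (2 * fib (s+1) - fib s) := Nat.fib_two_mul s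
      have hle := fib_le_two_succ s
      rcases (show s % 6 = 0 ∨ s % 6 = 3 by omega) with h60 | h63
      · -- Lucas factor ≡ 2 mod 8
        have hl := lucas_even (s := s) (by omega)
        obtain ⟨w, hw⟩ : ∃ w, 2 * fib (s+1) - fib s = 2 * w ∧ w % 2 = 1 :=
          ⟨(2 * fib (s+1) - fib s)/2, by omega⟩
        rw [hfib, hw.1] at h
        have h3 : 2^a ∣ fib s * w := by
          have h2 : 2^a * 2 ∣ (fib s * w) * 2 := by
            rw [← pow_succ]
            convert h using 1
            ring
          exact (Nat.mul_dvd_mul_iff_right (show 0 < 2 by norm_num)).mp h2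
        have hcop : Nat.Coprime (2^a) w :=
          Nat.Coprime.pow_left _ ((Nat.Prime.coprime_iff_not_dvd Nat.prime_two).mpr (by omega))
        have h4 : 2^a ∣ fib s := hcop.dvd_of_dvd_mul_right h3
        obtain ⟨c, hc⟩ := (ih s).mp h4
        exact ⟨c, by rw [hc, show a+1-2 = (a-2)+1 from by omega, pow_succ]; ring⟩
      · -- ν₂(fib 2s) = 3 exactly: contradiction with a+1 ≥ 4
        obtain ⟨hx4, hD8⟩ := lucas_odd h63
        obtain ⟨p, hp⟩ : ∃ p, fib s = 2 * p ∧ p % 2 = 1 := ⟨fib s / 2, by omega⟩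
        obtain ⟨q, hq⟩ : ∃ q, 2 * fib (s+1) - fib s = 4 * q ∧ q % 2 = 1 :=
          ⟨(2 * fib (s+1) - fib s)/4, by omega⟩
        exfalso
        have h16 : 16 ∣ fib (2*s) := dvd_trans (by
          have := pow_dvd_pow 2 (show 4 ≤ a+1 by omega)
          simpa using this) h
        rw [hfib, hq.1, hp.1] at h16
        have : 16 ∣ 8 * (p * q) := by
          convert h16 using 1
          ring
        have hpq : p * q % 2 = 1 := Nat.odd_mul_odd hp.2 hq.2
        omega
    · intro hdvd
      have h1 : 3 * 2^(a-2) * 2 ∣ ℓ := by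
        have : 3 * 2^(a+1-2) = 3 * 2^(a-2) * 2 := by
          rw [show a+1-2 = (a-2)+1 from by omega, pow_succ]; ring
        rwa [this] at hdvd
      set n : ℕ := 3 * 2^(a-2) with hn
      have h2n : fib (2*n) ∣ fib ℓ := Nat.fib_dvd _ _ (by
        obtain ⟨c, hc⟩ := h1
        exact ⟨c, by rw [hc]; ring⟩)
      have hfib : fib (2*n) = fib n * (2 * fib (n+1) - fib n) := Nat.fib_two_mul n
      have h2a : 2^a ∣ fib n := (ih n).mpr dvd_rfl
      have h6n : 6 ∣ n := by
        have : n = 6 * 2^(a-3) := by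
          rw [hn, show a-2 = (a-3)+1 from by omega, pow_succ]; ring
        exact ⟨2^(a-3), this⟩
      have hl := lucas_even h6n
      have h2l : 2 ∣ (2 * fib (n+1) - fib n) := by omega
      refine dvd_trans ?_ h2n
      rw [hfib, pow_succ]
      exact mul_dvd_mul h2a h2l

lemma z_eq_of_W {n L : ℕ} (hL : 0 < L) (hW : ∀ ℓ, n ∣ fib ℓ ↔ L ∣ ℓ) : z n = L := by
  have hmemL : L ∈ {ℓ : ℕ | 0 < ℓ ∧ n ∣ Nat.fib ℓ} := ⟨hL, (hW L).mpr dvd_rfl⟩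
  apply le_antisymm
  · exact Nat.sInf_le hmemL
  · have hmem := Nat.sInf_mem (Set.nonempty_of_mem hmemL)
    obtain ⟨hpos, hdvd⟩ := hmem
    exact Nat.le_of_dvd hpos ((hW _).mp hdvd)

lemma W_mul {a b A B : ℕ} (hab : Nat.Coprime a b)
    (hA : ∀ ℓ, a ∣ fib ℓ ↔ A ∣ ℓ) (hB : ∀ ℓ, b ∣ fib ℓ ↔ B ∣ ℓ) :
    ∀ ℓ, a * b ∣ fib ℓ ↔ Nat.lcm A B ∣ ℓ := by
  intro ℓ
  constructor
  · intro h
    exact Nat.lcm_dvd ((hA ℓ).mp (dvd_trans (dvd_mul_right a b) h))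
      ((hB ℓ).mp (dvd_trans (dvd_mul_left b a) h))
  · intro h
    exact hab.mul_dvd_of_dvd_of_dvd
      ((hA ℓ).mpr (dvd_trans (Nat.dvd_lcm_left A B) h))
      ((hB ℓ).mpr (dvd_trans (Nat.dvd_lcm_right A B) h))

lemma z_ten_pow {m : ℕ} (hm : 3 ≤ m) : z (10^m) = 3 * 5^m * 2^(m-2) := by
  have h10 : (10:ℕ)^m = 2^m * 5^m := by
    rw [show (10:ℕ) = 2*5 from rfl, mul_pow]
  have hcop : Nat.Coprime (2^m) (5^m) :=
    Nat.Coprime.pow _ _ (by norm_num : Nat.Coprime 2 5)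
  have hW := W_mul hcop (dvd_two_pow_fib m hm) (dvd_five_pow_fib m (by omega))
  have hlcm : Nat.lcm (3 * 2^(m-2)) (5^m) = 3 * 5^m * 2^(m-2) := by
    have hc : Nat.Coprime (3 * 2^(m-2)) (5^m) :=
      Nat.Coprime.mul ((show Nat.Coprime 3 5 from by norm_num).pow_right m)
        (Nat.Coprime.pow _ _ (by norm_num : Nat.Coprime 2 5))
    rw [Nat.Coprime.lcm_eq_mul hc]; ring
  apply z_eq_of_W (by positivity)
  intro ℓ
  rw [h10, ← hlcm]
  exact hW ℓ

lemma z_aux {m e : ℕ} (hm : 1 ≤ m) (he : 4 ≤ e) :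
    z (3 * 5^m * 2^e) = 3 * 5^m * 2^(e-2) := by
  have hcop1 : Nat.Coprime (5^m) (2^e) :=
    Nat.Coprime.pow _ _ (by norm_num : Nat.Coprime 5 2)
  have hW1 := W_mul hcop1 (dvd_five_pow_fib m hm) (dvd_two_pow_fib e (by omega))
  have hcop2 : Nat.Coprime 3 (5^m * 2^e) :=
    Nat.Coprime.mul_right ((show Nat.Coprime 3 5 from by norm_num).pow_right m)
      ((show Nat.Coprime 3 2 from by norm_num).pow_right e)
  have hW2 := W_mul hcop2 dvd3_fib hW1
  have hlcm1 : Nat.lcm (5^m) (3 * 2^(e-2)) = 5^m * (3 * 2^(e-2)) := by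
    apply Nat.Coprime.lcm_eq_mul
    exact Nat.Coprime.mul_right ((show Nat.Coprime 5 3 from by norm_num).pow_left m)
      (Nat.Coprime.pow _ _ (by norm_num : Nat.Coprime 5 2))
  have h4dvd : 4 ∣ 5^m * (3 * 2^(e-2)) := by
    have : (4:ℕ) ∣ 2^(e-2) := by
      have : (2:ℕ)^2 ∣ 2^(e-2) := pow_dvd_pow 2 (by omega)
      simpa using this
    exact Dvd.dvd.mul_left (Dvd.dvd.mul_left this 3) (5^m)
  have hlcm2 : Nat.lcm 4 (Nat.lcm (5^m) (3 * 2^(e-2))) = 3 * 5^m * 2^(e-2) := by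
    rw [hlcm1]
    rw [Nat.dvd_antisymm (Nat.lcm_dvd h4dvd dvd_rfl) (Nat.dvd_lcm_right _ _)]
    ring
  apply z_eq_of_W (by positivity)
  intro ℓ
  rw [show 3 * 5^m * 2^e = 3 * (5^m * 2^e) from by ring, ← hlcm2]
  exact hW2 ℓ

theorem z_iter_ten_pow (k m : ℕ) (hk : 1 ≤ k) (hm : 4 ≤ m) (h : 2 * k + 2 ≤ m) :
    z^[k] (10 ^ m) = 3 * 5 ^ m * 2 ^ (m - 2 * k) := by
  have key : ∀ j e, 2*j + 2 ≤ e → z^[j] (3 * 5^m * 2^e) = 3 * 5^m * 2^(e - 2*j) := by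
    intro j
    induction j with
    | zero => intro e he; simp
    | succ j ihj =>
      intro e he
      rw [Function.iterate_succ_apply, z_aux (by omega) (by omega), ihj (e-2) (by omega),
        show e - 2 - 2*j = e - 2*(j+1) from by omega]
  obtain ⟨k', rfl⟩ : ∃ k', k = k' + 1 := ⟨k - 1, by omega⟩
  rw [Function.iterate_succ_apply, z_ten_pow (by omega), key k' (m-2) (by omega),
    show m - 2 - 2*k' = m - 2*(k'+1) from by omega]
end

section
/- For all integers k ≥ 2 and a ≥ 4, z^k(2^a) = lcm( 3·2^{max(a-2k, 0)}, 4 ). -/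
open Nat

lemma fib_parity : ∀ n : ℕ, Nat.fib n % 2 = (if n % 3 = 0 then 0 else 1)
  | 0 => rfl
  | 1 => rfl
  | 2 => rfl
  | (n+3) => by
    have h1 := fib_parity n
    have h2 : Nat.fib (n+3) = 2 * Nat.fib (n+1) + Nat.fib n := by
      rw [show n+3 = (n+1)+2 from rfl, Nat.fib_add_two, Nat.fib_add_two]; ring
    rw [h2, show (n+3) % 3 = n % 3 by omega]
    split_ifs at h1 ⊢ <;> omega

lemma dvd_fib_gcd {n ℓ w : ℕ} (hw : n ∣ Nat.fib w) (h : n ∣ Nat.fib ℓ) :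
    n ∣ Nat.fib (Nat.gcd ℓ w) := by
  rw [Nat.fib_gcd]; exact Nat.dvd_gcd h hw

lemma aux12 (ℓ : ℕ) (h : 12 ∣ Nat.fib ℓ) : 12 ∣ ℓ := by
  have hw : (12:ℕ) ∣ Nat.fib 12 := by decide
  have hg := dvd_fib_gcd hw h
  have hd : Nat.gcd ℓ 12 ∣ 12 := Nat.gcd_dvd_right _ _
  have hle : Nat.gcd ℓ 12 ≤ 12 := Nat.le_of_dvd (by norm_num) hd
  have : Nat.gcd ℓ 12 = 12 := by
    interval_cases h : Nat.gcd ℓ 12 <;> revert hg hd <;> decide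
  exact this ▸ Nat.gcd_dvd_left _ _

lemma aux16 (ℓ : ℕ) (h : 16 ∣ Nat.fib ℓ) : 12 ∣ ℓ := by
  have hw : (16:ℕ) ∣ Nat.fib 12 := by decide
  have hg := dvd_fib_gcd hw h
  have hd : Nat.gcd ℓ 12 ∣ 12 := Nat.gcd_dvd_right _ _
  have hle : Nat.gcd ℓ 12 ≤ 12 := Nat.le_of_dvd (by norm_num) hd
  have : Nat.gcd ℓ 12 = 12 := by
    interval_cases h : Nat.gcd ℓ 12 <;> revert hg hd <;> decide
  exact this ▸ Nat.gcd_dvd_left _ _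

/-- exact 2-adic valuation of `fib (3 * 2^(b-2))` for `b ≥ 4` -/
lemma valE : ∀ b : ℕ, 4 ≤ b → ∃ u : ℕ, u % 2 = 1 ∧ Nat.fib (3 * 2^(b-2)) = 2^b * u := by
  intro b hb
  induction b with
  | zero => omega
  | succ b ih =>
    rcases Nat.lt_or_ge b 4 with hb4 | hb4
    · have : b = 3 := by omega
      subst this
      exact ⟨9, by norm_num, by decide⟩
    · obtain ⟨u, hu, hfib⟩ := ih (by omega)
      set m := 3 * 2^(b-2) with hm
      have hm1 : 1 ≤ m := by
        have : 0 < 2^(b-2) := Nat.pow_pos (by norm_num)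
        omega
      have h2m : 3 * 2^(b+1-2) = 2 * m := by
        rw [hm, show b+1-2 = (b-2)+1 by omega, pow_succ]; ring
      have hfib1 : Nat.fib (m+1) = Nat.fib (m-1) + Nat.fib m := by
        rw [show m + 1 = (m-1) + 2 by omega, Nat.fib_add_two,
          show m - 1 + 1 = m by omega]
      have hkey : Nat.fib (2*m) = Nat.fib m * (2 * Nat.fib (m-1) + Nat.fib m) := by
        rw [Nat.fib_two_mul, hfib1]; congr 1; omega
      have hodd : Nat.fib (m-1) % 2 = 1 := by
        have := fib_parity (m-1)
        have h3 : ¬ ((m-1) % 3 = 0) := by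
          have : m % 3 = 0 := by omega
          omega
        simpa [h3] using this
      refine ⟨u * (Nat.fib (m-1) + 2^(b-1) * u), ?_, ?_⟩
      · rw [← Nat.odd_iff]
        have he : Even (2^(b-1) * u) := by
          refine (Even.mul_right ?_ u)
          exact (even_pow.mpr ⟨even_two, by omega⟩)
        have ho1 : Odd (Nat.fib (m-1)) := Nat.odd_iff.mpr hodd
        exact (Nat.odd_iff.mpr hu).mul (ho1.add_even he)
      · rw [h2m, hkey, hfib]
        have hb2 : (2:ℕ)^b = 2 * 2^(b-1) := by
          obtain ⟨c, rfl⟩ : ∃ c, b = c+1 := ⟨b-1, by omega⟩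
          rw [Nat.add_sub_cancel, pow_succ]; ring
        calc 2^b * u * (2 * Nat.fib (m-1) + 2^b * u)
            = 2^b * u * (2 * Nat.fib (m-1) + 2 * 2^(b-1) * u) := by rw [← hb2]
          _ = 2^(b+1) * (u * (Nat.fib (m-1) + 2^(b-1) * u)) := by rw [pow_succ]; ring

lemma witnessE (b : ℕ) (hb : 4 ≤ b) : 3 * 2^b ∣ Nat.fib (3 * 2^(b-2)) := by
  obtain ⟨u, hu, hfib⟩ := valE b hb
  have h12 : (12:ℕ) ∣ 3 * 2^(b-2) := by
    refine ⟨2^(b-4), ?_⟩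
    rw [show b-2 = (b-4)+2 by omega, pow_add]; ring
  have h3 : (3:ℕ) ∣ Nat.fib (3 * 2^(b-2)) := by
    have := Nat.fib_dvd 12 (3 * 2^(b-2)) h12
    exact dvd_trans (by decide) this
  rw [hfib] at h3 ⊢
  have hcop : Nat.Coprime 3 (2^b) := Nat.Coprime.pow_right b (by decide)
  have h3u : 3 ∣ u := (Nat.Coprime.dvd_of_dvd_mul_left hcop h3)
  obtain ⟨v, rfl⟩ := h3u
  exact ⟨v, by ring⟩

lemma C4 : ∀ b, 4 ≤ b → ∀ ℓ, (3 * 2^b ∣ Nat.fib ℓ ↔ 3 * 2^(b-2) ∣ ℓ) := by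
  intro b
  induction b with
  | zero => omega
  | succ b ih =>
    intro hb ℓ
    rcases Nat.lt_or_ge b 4 with hb4 | hb4
    · have : b = 3 := by omega
      subst this
      norm_num
      constructor
      · intro h
        exact aux12 ℓ (dvd_trans (by norm_num) h)
      · intro h
        have := Nat.fib_dvd 12 ℓ h
        exact dvd_trans (by decide) this
    · have hE : 3 * 2^(b+1) ∣ Nat.fib (3 * 2^(b-1)) := by
        have := witnessE (b+1) (by omega)
        rwa [show b+1-2 = b-1 by omega] at this
      rw [show b+1-2 = b-1 by omega]
      constructor
      · intro h
        rcases Nat.eq_zero_or_pos ℓ with rfl | hℓ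
        · exact dvd_zero _
        set g := Nat.gcd ℓ (3 * 2^(b-1)) with hgdef
        have hg : 3 * 2^(b+1) ∣ Nat.fib g := dvd_fib_gcd hE h
        have hIH : 3 * 2^(b-2) ∣ g := by
          refine (ih hb4 g).mp (dvd_trans ?_ hg)
          exact Nat.mul_dvd_mul_left 3 (pow_dvd_pow 2 (by omega))
        have hgd : g ∣ 3 * 2^(b-1) := Nat.gcd_dvd_right _ _
        obtain ⟨c, hc⟩ := hIH
        have hsplit : (3:ℕ) * 2^(b-1) = 3 * 2^(b-2) * 2 := by
          rw [show b-1 = (b-2)+1 by omega, pow_succ]; ring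
        have hpos : 0 < 3 * 2^(b-2) := by positivity
        have hcd : c ∣ 2 := by
          have : 3 * 2^(b-2) * c ∣ 3 * 2^(b-2) * 2 := by
            rw [← hc, ← hsplit]; exact hgd
          exact (Nat.mul_dvd_mul_iff_left hpos).mp this
        have hgpos : 0 < g := Nat.gcd_pos_of_pos_left _ hℓ
        have hc12 : c = 1 ∨ c = 2 := (Nat.dvd_prime Nat.prime_two).mp hcd
        rcases hc12 with rfl | rfl
        · exfalso
          obtain ⟨u, hu, hfib⟩ := valE b hb4
          rw [mul_one] at hc
          rw [hc, hfib] at hg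
          obtain ⟨t, ht⟩ := hg
          have h2b : (2:ℕ)^(b+1) = 2^b * 2 := pow_succ 2 b
          have : 2^b * u = 2^b * (2 * (3 * t)) := by
            rw [ht, h2b]; ring
          have hu2 : u = 2 * (3 * t) :=
            Nat.eq_of_mul_eq_mul_left (by positivity) this
          omega
        · have : g ∣ ℓ := Nat.gcd_dvd_left _ _
          rw [hc, ← hsplit] at this
          exact this
      · intro h
        exact dvd_trans hE (Nat.fib_dvd _ _ h)

lemma z_of_iff {n d : ℕ} (hd : 0 < d) (h : ∀ ℓ, n ∣ Nat.fib ℓ ↔ d ∣ ℓ) : z n = d := by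
  unfold z
  have hset : {ℓ : ℕ | 0 < ℓ ∧ n ∣ Nat.fib ℓ} = {ℓ : ℕ | 0 < ℓ ∧ d ∣ ℓ} := by
    ext ℓ; simp [h ℓ]
  rw [hset]
  apply le_antisymm
  · exact Nat.sInf_le ⟨hd, dvd_rfl⟩
  · exact le_csInf ⟨d, hd, dvd_rfl⟩ (fun x hx => Nat.le_of_dvd hx.1 hx.2)

lemma z3pow (b : ℕ) (hb : 2 ≤ b) : z (3 * 2^b) = 3 * 2^(max (b-2) 2) := by
  apply z_of_iff (by positivity)
  intro ℓ
  rcases Nat.lt_or_ge b 4 with hb4 | hb4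
  · have hmax : max (b-2) 2 = 2 := by omega
    rw [hmax]
    interval_cases b
    · norm_num
      constructor
      · exact aux12 ℓ
      · intro h
        exact dvd_trans (by decide : (12:ℕ) ∣ Nat.fib 12) (Nat.fib_dvd 12 ℓ h)
    · norm_num
      constructor
      · intro h
        exact aux12 ℓ (dvd_trans (by norm_num) h)
      · intro h
        exact dvd_trans (by decide : (24:ℕ) ∣ Nat.fib 12) (Nat.fib_dvd 12 ℓ h)
  · rw [show max (b-2) 2 = b-2 by omega]
    exact C4 b hb4 ℓ

lemma z2pow (a : ℕ) (ha : 4 ≤ a) : z (2^a) = 3 * 2^(a-2) := by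
  apply z_of_iff (by positivity)
  intro ℓ
  constructor
  · intro h
    refine (C4 a ha ℓ).mp ?_
    have h16 : (16:ℕ) ∣ Nat.fib ℓ := dvd_trans (pow_dvd_pow 2 ha) h
    have h12 := aux16 ℓ h16
    have h3 : (3:ℕ) ∣ Nat.fib ℓ :=
      dvd_trans (by decide : (3:ℕ) ∣ Nat.fib 12) (Nat.fib_dvd 12 ℓ h12)
    exact Nat.Coprime.mul_dvd_of_dvd_of_dvd
      (Nat.Coprime.pow_right a (by decide)) h3 h
  · intro h
    exact dvd_trans (dvd_mul_left _ _) ((C4 a ha ℓ).mpr h)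

lemma zIter : ∀ k, 1 ≤ k → ∀ b, 2 ≤ b → z^[k] (3 * 2^b) = 3 * 2^(max (b - 2*k) 2) := by
  intro k
  induction k with
  | zero => omega
  | succ k ih =>
    intro _ b hb
    rw [Function.iterate_succ_apply, z3pow b hb]
    rcases Nat.eq_zero_or_pos k with rfl | hk
    · rw [Function.iterate_zero_apply, show max (b-2) 2 = max (b - 2*1) 2 by omega]
    · rw [ih hk (max (b-2) 2) (le_max_right _ _),
        show max (max (b-2) 2 - 2*k) 2 = max (b - 2*(k+1)) 2 by omega]

theorem z_iter_two_pow (k a : ℕ) (hk : 2 ≤ k) (ha : 4 ≤ a) :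
    z^[k] (2 ^ a) = Nat.lcm (3 * 2 ^ (max (a - 2 * k) 0)) 4 := by
  obtain ⟨j, rfl⟩ : ∃ j, k = j + 1 := ⟨k-1, by omega⟩
  rw [Function.iterate_succ_apply, z2pow a ha,
    zIter j (by omega) (a-2) (by omega)]
  rcases Nat.lt_or_ge (a - 2*(j+1)) 2 with h2 | h2
  · rw [show max (a - 2 - 2*j) 2 = 2 by omega]
    have h01 : a - 2*(j+1) = 0 ∨ a - 2*(j+1) = 1 := by omega
    rcases h01 with h | h <;>
      rw [show max (a - 2*(j+1)) 0 = a - 2*(j+1) by omega, h] <;> decide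
  · obtain ⟨d, hd⟩ : ∃ d, a - 2*(j+1) = d + 2 := ⟨a - 2*(j+1) - 2, by omega⟩
    rw [show max (a - 2 - 2*j) 2 = d + 2 by omega,
      show max (a - 2*(j+1)) 0 = d + 2 by omega]
    symm
    exact Nat.dvd_antisymm
      (Nat.lcm_dvd dvd_rfl ⟨3 * 2^d, by rw [pow_add]; ring⟩)
      (Nat.dvd_lcm_left _ _)
end

section
/- For every non-negative integer k, the set of positive integers n for which there exists a non-negative integer m with z^m(n) = 12·5^k is infinite; that is, infinitely many integers iterate under z to each fixed point of the form 12·5^k. -/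
lemma fib_dvd_imp_dvd {m ℓ : ℕ} (hm : 3 ≤ m) (h : Nat.fib m ∣ Nat.fib ℓ) : m ∣ ℓ := by
  have hg : Nat.fib (Nat.gcd m ℓ) = Nat.fib m := by
    rw [Nat.fib_gcd, Nat.gcd_eq_left h]
  have hfm : 2 ≤ Nat.fib m := by
    have h3 : Nat.fib 3 ≤ Nat.fib m := Nat.fib_mono hm
    exact le_trans (by norm_num) h3
  have hge : 2 ≤ Nat.gcd m ℓ := by
    by_contra hlt
    push_neg at hlt
    have hle : Nat.fib (Nat.gcd m ℓ) ≤ 1 := by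
      interval_cases (Nat.gcd m ℓ) <;> simp
    omega
  have : Nat.gcd m ℓ = m :=
    Nat.fib_strictMonoOn.injOn hge (by omega : (2:ℕ) ≤ m) hg
  exact this ▸ Nat.gcd_dvd_right m ℓ

lemma z_fib {m : ℕ} (hm : 3 ≤ m) : z (Nat.fib m) = m := by
  unfold z
  apply le_antisymm
  · exact Nat.sInf_le ⟨by omega, dvd_rfl⟩
  · refine le_csInf ⟨m, ⟨by omega, dvd_rfl⟩⟩ ?_
    rintro ℓ ⟨hℓ, hdvd⟩
    exact Nat.le_of_dvd hℓ (fib_dvd_imp_dvd hm hdvd)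

lemma lt_fib_self {n : ℕ} (hn : 12 ≤ n) : n < Nat.fib n := by
  have h1 : n - 1 ≤ Nat.fib (n - 1) := Nat.le_fib_self (by omega)
  have h0 : n - 2 ≤ Nat.fib (n - 2) := Nat.le_fib_self (by omega)
  have h2 : Nat.fib (n - 2 + 2) = Nat.fib (n - 2) + Nat.fib (n - 2 + 1) := Nat.fib_add_two
  have e1 : n - 2 + 2 = n := by omega
  have e2 : n - 2 + 1 = n - 1 := by omega
  rw [e1, e2] at h2
  omega

theorem infinitely_many_reach_fixed_point (k : ℕ) :
    {n : ℕ | 0 < n ∧ ∃ m : ℕ, z^[m] n = 12 * 5 ^ k}.Infinite := by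
  set t := 12 * 5 ^ k with ht
  have ht12 : 12 ≤ t := by
    have : 1 ≤ 5 ^ k := Nat.one_le_pow _ _ (by omega)
    calc 12 = 12 * 1 := by ring
    _ ≤ 12 * 5 ^ k := by exact Nat.mul_le_mul_left 12 this
  -- the iterated Fibonacci sequence starting at t
  let a : ℕ → ℕ := fun j => Nat.fib^[j] t
  have ha12 : ∀ j, 12 ≤ a j := by
    intro j
    induction j with
    | zero => exact ht12
    | succ j ih =>
      have : a (j + 1) = Nat.fib (a j) := Function.iterate_succ_apply' _ _ _
      rw [this]
      exact le_of_lt (lt_of_le_of_lt ih (lt_fib_self ih))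
  have hlt : ∀ j, a j < a (j + 1) := by
    intro j
    have : a (j + 1) = Nat.fib (a j) := Function.iterate_succ_apply' _ _ _
    rw [this]
    exact lt_fib_self (ha12 j)
  have hmono : StrictMono a := strictMono_nat_of_lt_succ hlt
  have hmem : ∀ j, a j ∈ {n : ℕ | 0 < n ∧ ∃ m : ℕ, z^[m] n = t} := by
    intro j
    refine ⟨by have := ha12 j; omega, j, ?_⟩
    induction j with
    | zero => rfl
    | succ j ih =>
      have h1 : a (j + 1) = Nat.fib (a j) := Function.iterate_succ_apply' _ _ _
      have : z^[j + 1] (a (j + 1)) = z^[j] (z (Nat.fib (a j))) := by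
        rw [h1, Function.iterate_succ_apply]
      rw [this, z_fib (by have := ha12 j; omega)]
      exact ih
  exact Set.infinite_of_injective_forall_mem hmono.injective hmem
end

section
/- For every positive integer n, there exists a non-negative integer k such that z^k(n) is a fixed point of z, i.e., z( z^k(n) ) = z^k(n); hence every positive integer has finite fixed point order. -/
namespace ZProof
open Nat Polynomial

lemma exists_fib_dvd (n : ℕ) (hn : 0 < n) : ∃ ℓ, 0 < ℓ ∧ n ∣ Nat.fib ℓ := by
  haveI : NeZero n := ⟨hn.ne'⟩
  let e : Equiv.Perm (ZMod n × ZMod n) :=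
    { toFun := fun p => (p.2, p.1 + p.2)
      invFun := fun p => (p.2 - p.1, p.1)
      left_inv := by intro p; simp
      right_inv := by intro p; simp }
  have key : ∀ k : ℕ, (e ^ k) ((0 : ZMod n), (1 : ZMod n))
      = ((Nat.fib k : ZMod n), (Nat.fib (k+1) : ZMod n)) := by
    intro k
    induction k with
    | zero => simp
    | succ k ih =>
      rw [add_comm k 1, pow_add, pow_one, Equiv.Perm.mul_apply, ih]
      show ((Nat.fib (k+1) : ZMod n), (Nat.fib k : ZMod n) + (Nat.fib (k+1) : ZMod n)) = _
      rw [add_comm 1 k, show k + 1 + 1 = k + 2 from rfl, Nat.fib_add_two]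
      push_cast
      ring_nf
  refine ⟨orderOf e, orderOf_pos e, ?_⟩
  have h1 : (e ^ orderOf e) ((0 : ZMod n), (1 : ZMod n)) = ((0 : ZMod n), (1 : ZMod n)) := by
    rw [pow_orderOf_eq_one]; rfl
  rw [key] at h1
  have h2 : ((Nat.fib (orderOf e) : ZMod n)) = 0 := (Prod.mk.injEq _ _ _ _ ▸ h1).1
  exact (ZMod.natCast_eq_zero_iff _ _).mp h2

variable {n : ℕ}

lemma z_pos_dvd (hn : 0 < n) : 0 < z n ∧ n ∣ Nat.fib (z n) :=
  Nat.sInf_mem (exists_fib_dvd n hn)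

lemma z_pos (hn : 0 < n) : 0 < z n := (z_pos_dvd hn).1

lemma dvd_fib_z (hn : 0 < n) : n ∣ Nat.fib (z n) := (z_pos_dvd hn).2

lemma z_le {ℓ : ℕ} (hl : 0 < ℓ) (h : n ∣ Nat.fib ℓ) : z n ≤ ℓ :=
  Nat.sInf_le ⟨hl, h⟩

/-- The fundamental characterization: `n ∣ fib ℓ ↔ z n ∣ ℓ`. -/
lemma z_dvd_iff (hn : 0 < n) (ℓ : ℕ) : z n ∣ ℓ ↔ n ∣ Nat.fib ℓ := by
  constructor
  · intro h
    exact (dvd_fib_z hn).trans (Nat.fib_dvd _ _ h)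
  · intro h
    rcases Nat.eq_zero_or_pos ℓ with rfl | hl
    · exact dvd_zero _
    have hg : n ∣ Nat.fib (Nat.gcd ℓ (z n)) := by
      rw [Nat.fib_gcd]
      exact Nat.dvd_gcd h (dvd_fib_z hn)
    have hgpos : 0 < Nat.gcd ℓ (z n) := Nat.gcd_pos_of_pos_left _ hl
    have h1 : z n ≤ Nat.gcd ℓ (z n) := z_le hgpos hg
    have h2 : Nat.gcd ℓ (z n) ∣ z n := Nat.gcd_dvd_right _ _
    have heq : Nat.gcd ℓ (z n) = z n :=
      Nat.le_antisymm (Nat.le_of_dvd (z_pos hn) h2) h1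
    rw [← heq]
    exact Nat.gcd_dvd_left _ _

lemma z_eq_of {n m : ℕ} (hn : 0 < n) (hm : 0 < m) (h : n ∣ Nat.fib m)
    (hmin : ∀ l, 0 < l → l < m → ¬ n ∣ Nat.fib l) : z n = m :=
  le_antisymm (z_le hm h)
    (le_of_not_gt fun hlt => hmin _ (z_pos hn) hlt (dvd_fib_z hn))

lemma z_one : z 1 = 1 := z_eq_of one_pos one_pos (one_dvd _) (fun l h1 h2 => absurd h1 (by omega))
lemma z_two : z 2 = 3 := z_eq_of (by norm_num) (by norm_num) (by decide)
  (by intro l h1 h2; interval_cases l <;> decide)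
lemma z_three : z 3 = 4 := z_eq_of (by norm_num) (by norm_num) (by decide)
  (by intro l h1 h2; interval_cases l <;> decide)
lemma z_four : z 4 = 6 := z_eq_of (by norm_num) (by norm_num) (by decide)
  (by intro l h1 h2; interval_cases l <;> decide)
lemma z_five : z 5 = 5 := z_eq_of (by norm_num) (by norm_num) (by decide)
  (by intro l h1 h2; interval_cases l <;> decide)
lemma z_six : z 6 = 12 := z_eq_of (by norm_num) (by norm_num) (by decide)
  (by intro l h1 h2; interval_cases l <;> decide)
lemma z_twelve : z 12 = 12 := z_eq_of (by norm_num) (by norm_num) (by decide)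
  (by intro l h1 h2; interval_cases l <;> decide)

lemma z_mul_coprime {a b : ℕ} (ha : 0 < a) (hb : 0 < b) (hab : Nat.Coprime a b) :
    z (a * b) = Nat.lcm (z a) (z b) := by
  have hab' : 0 < a * b := Nat.mul_pos ha hb
  apply Nat.dvd_antisymm
  · rw [z_dvd_iff hab']
    exact Nat.Coprime.mul_dvd_of_dvd_of_dvd hab
      ((z_dvd_iff ha _).mp (Nat.dvd_lcm_left _ _))
      ((z_dvd_iff hb _).mp (Nat.dvd_lcm_right _ _))
  · refine Nat.lcm_dvd ?_ ?_
    · rw [z_dvd_iff ha]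
      exact (dvd_mul_right a b).trans (dvd_fib_z hab')
    · rw [z_dvd_iff hb]
      exact (dvd_mul_left b a).trans (dvd_fib_z hab')

/-- Key congruences: `F_{t k} ≡ t F_k F_{k+1}^{t-1}` and `F_{tk+1} ≡ F_{k+1}^t mod F_k²`. -/
lemma fib_mul_modeq (k : ℕ) : ∀ t : ℕ,
    ((Nat.fib ((t+1)*(k+1)) : ℤ) ≡ (t+1) * Nat.fib (k+1) * Nat.fib (k+2)^t
      [ZMOD (Nat.fib (k+1) : ℤ)^2]) ∧
    ((Nat.fib ((t+1)*(k+1)+1) : ℤ) ≡ Nat.fib (k+2)^(t+1) [ZMOD (Nat.fib (k+1) : ℤ)^2]) := by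
  intro t
  induction t with
  | zero =>
    exact ⟨by simp, by simp⟩
  | succ t ih =>
    obtain ⟨ih1, ih2⟩ := ih
    set F : ℤ := (Nat.fib (k+1) : ℤ)
    set G : ℤ := (Nat.fib (k+2) : ℤ)
    set m : ℕ := (t+1)*(k+1)
    have hfk : (Nat.fib k : ℤ) = G - F := by
      have : Nat.fib (k+2) = Nat.fib (k+1) + Nat.fib k := by
        rw [Nat.fib_add_two]; ring
      simp only [F, G, this]; push_cast; ring
    -- identity for fib ((t+2)*(k+1))
    have id1 : (Nat.fib ((t+2)*(k+1)) : ℤ) = Nat.fib m * Nat.fib k + Nat.fib (m+1) * F := by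
      have h := Nat.fib_add m k
      have he : m + k + 1 = (t+2)*(k+1) := by simp only [m]; ring
      rw [he] at h
      rw [h]; push_cast; ring
    have id2 : (Nat.fib ((t+2)*(k+1)+1) : ℤ) = Nat.fib m * F + Nat.fib (m+1) * G := by
      have h := Nat.fib_add m (k+1)
      have he : m + (k+1) + 1 = (t+2)*(k+1)+1 := by simp only [m]; ring
      rw [he] at h
      rw [h]; push_cast; ring
    constructor
    · rw [id1, hfk]
      have step : (Nat.fib m : ℤ) * (G - F) + (Nat.fib (m+1) : ℤ) * F
          ≡ ((t+1) * F * G^t) * (G - F) + (G^(t+1)) * F [ZMOD F^2] :=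
        Int.ModEq.add (ih1.mul_right _) (ih2.mul_right _)
      refine step.trans ?_
      have : ((t+1) * F * G^t) * (G - F) + (G^(t+1)) * F
          = (((t:ℤ)+1+1) * F * G^(t+1)) + (-((t:ℤ)+1) * G^t) * F^2 := by ring
      rw [this]
      have goal_eq : ((t:ℤ)+1+1) * F * G^(t+1) = ((t+1:ℕ)+1 : ℤ) * F * G^(t+1) := by push_cast; ring
      calc (((t:ℤ)+1+1) * F * G^(t+1)) + (-((t:ℤ)+1) * G^t) * F^2
          ≡ ((t:ℤ)+1+1) * F * G^(t+1) [ZMOD F^2] := by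
            exact (Int.modEq_iff_dvd.mpr ⟨(-((t:ℤ)+1) * G^t), by ring⟩).symm
        _ = ((t+1:ℕ)+1 : ℤ) * F * G^(t+1) := goal_eq
    · rw [id2]
      have step : (Nat.fib m : ℤ) * F + (Nat.fib (m+1) : ℤ) * G
          ≡ ((t+1) * F * G^t) * F + (G^(t+1)) * G [ZMOD F^2] :=
        Int.ModEq.add (ih1.mul_right _) (ih2.mul_right _)
      refine step.trans ?_
      have : ((t+1:ℤ) * F * G^t) * F + (G^(t+1)) * G = G^(t+2) + ((t+1:ℤ) * G^t) * F^2 := by ring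
      rw [this]
      exact (Int.modEq_iff_dvd.mpr ⟨((t:ℤ)+1) * G^t, by ring⟩).symm

/-- Lifting the exponent step: if `p^a ∣ F_k` (`a ≥ 1`) then `p^(a+1) ∣ F_{p k}`. -/
lemma pow_succ_dvd_fib_mul {p a k : ℕ} (hp : 2 ≤ p) (ha : 1 ≤ a) (hk : 1 ≤ k)
    (h : p^a ∣ Nat.fib k) : p^(a+1) ∣ Nat.fib (p*k) := by
  obtain ⟨k', rfl⟩ : ∃ k', k = k' + 1 := ⟨k - 1, by omega⟩
  obtain ⟨t, rfl⟩ : ∃ t, p = t + 1 := ⟨p - 1, by omega⟩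
  have hm := (fib_mul_modeq k' t).1
  have hpF : ((t+1:ℕ)^a : ℤ) ∣ (Nat.fib (k'+1) : ℤ) := by exact_mod_cast h
  set F : ℤ := (Nat.fib (k'+1) : ℤ) with hF
  have h1 : ((t+1:ℕ)^(a+1) : ℤ) ∣ F^2 := by
    calc ((t+1:ℕ)^(a+1) : ℤ) ∣ ((t+1:ℕ)^a : ℤ)^2 := by
          push_cast [← pow_mul]
          exact pow_dvd_pow _ (by omega)
      _ ∣ F^2 := pow_dvd_pow_of_dvd hpF 2
  have h2 : ((t+1:ℕ)^(a+1) : ℤ) ∣ ((t:ℤ)+1) * F * (Nat.fib (k'+2):ℤ)^t := by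
    have he : ((t+1:ℕ)^(a+1) : ℤ) = ((t:ℤ)+1) * ((t+1:ℕ)^a : ℤ) := by push_cast; ring
    rw [he]
    exact ((mul_dvd_mul_left _ hpF).mul_right _)
  have hdvd : ((t+1:ℕ)^(a+1) : ℤ) ∣ (Nat.fib ((t+1)*(k'+1)) : ℤ) := by
    have hd := Int.ModEq.dvd hm
    -- hd : F^2 ∣ (t+1) * fib(k'+1) * fib(k'+2)^t - fib ((t+1)*(k'+1))
    have := dvd_sub h2 (h1.trans hd)
    simpa using this
  exact_mod_cast hdvd

lemma fib_rel {R : Type*} [CommRing R] (x : R) (hx : x^2 = x + 1) :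
    ∀ n : ℕ, x^(n+1) = (Nat.fib (n+1) : R) * x + (Nat.fib n : R) := by
  intro n
  induction n with
  | zero => simp
  | succ n ih =>
    have h : x^(n+1+1) = x^(n+1) * x := by ring
    rw [h, ih, Nat.fib_add_two]
    push_cast
    linear_combination (Nat.fib (n+1) : R) * hx

lemma apparition {p : ℕ} (hp : p.Prime) (hp5 : p ≠ 5) :
    p ∣ Nat.fib (p-1) ∨ p ∣ Nat.fib (p+1) := by
  haveI : Fact p.Prime := ⟨hp⟩
  have h5 : ((5 : ℕ) : ZMod p) ≠ 0 := by
    rw [Ne, ZMod.natCast_eq_zero_iff]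
    intro h
    exact hp5 ((Nat.prime_dvd_prime_iff_eq hp (by norm_num)).mp h)
  by_cases hroot : ∃ α : ZMod p, α^2 = α + 1
  · -- split case: work in ZMod p
    obtain ⟨α, hα⟩ := hroot
    left
    set β : ZMod p := 1 - α with hβ
    have hbeta : β^2 = β + 1 := by rw [hβ]; linear_combination hα
    have key : ∀ n : ℕ, (Nat.fib n : ZMod p) * (α - β) = α^n - β^n := by
      have H : ∀ n : ℕ, ((Nat.fib n : ZMod p) * (α - β) = α^n - β^n) ∧
          ((Nat.fib (n+1) : ZMod p) * (α - β) = α^(n+1) - β^(n+1)) := by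
        intro n
        induction n with
        | zero => simp
        | succ n ih =>
          refine ⟨ih.2, ?_⟩
          rw [Nat.fib_add_two]
          push_cast
          linear_combination ih.1 + ih.2 - α^n * hα + β^n * hbeta
      exact fun n => (H n).1
    have hαβsq : (α - β)^2 = 5 := by rw [hβ]; push_cast; linear_combination 4 * hα
    have hαβ : α - β ≠ 0 := by
      intro h
      apply h5
      rw [h] at hαβsq
      push_cast
      rw [← hαβsq]; ring
    have hα0 : α ≠ 0 := by intro h; rw [h] at hα; simp at hα
    have hβ0 : β ≠ 0 := by intro h; rw [h] at hbeta; simp at hbeta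
    have hαp : α^(p-1) = 1 := ZMod.pow_card_sub_one_eq_one hα0
    have hβp : β^(p-1) = 1 := ZMod.pow_card_sub_one_eq_one hβ0
    have h0 : (Nat.fib (p-1) : ZMod p) * (α - β) = 0 := by
      rw [key, hαp, hβp, sub_self]
    rcases mul_eq_zero.mp h0 with h1 | h1
    · exact (ZMod.natCast_eq_zero_iff _ _).mp h1
    · exact absurd h1 hαβ
  · -- inert case: work in AdjoinRoot (X^2 - X - 1)
    set f : (ZMod p)[X] := X^2 - (X + 1) with hf
    have hmonic : f.Monic := by
      apply Polynomial.monic_X_pow_sub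
      have h1 : (X + 1 : (ZMod p)[X]).degree = 1 := by
        simpa using Polynomial.degree_X_add_C (1 : ZMod p)
      rw [h1]
      norm_num
    have hirr : Irreducible f := by
      have hdeg : f.natDegree = 2 := by
        have : f = X^2 + C (-1) * X + C (-1) := by rw [hf]; simp only [map_neg, Polynomial.C_1]; ring
        rw [this]
        compute_degree!
      rw [hmonic.irreducible_iff_roots_eq_zero_of_degree_le_three (by omega) (by omega)]
      by_contra hne
      obtain ⟨r, hr⟩ := Multiset.exists_mem_of_ne_zero hne
      rw [Polynomial.mem_roots hmonic.ne_zero] at hr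
      apply hroot
      refine ⟨r, ?_⟩
      have := hr
      simp only [Polynomial.IsRoot.def] at this
      simp only [hf, Polynomial.IsRoot, Polynomial.eval_sub, Polynomial.eval_pow,
        Polynomial.eval_add, Polynomial.eval_X, Polynomial.eval_one] at this
      linear_combination this
    haveI : Fact (Irreducible f) := ⟨hirr⟩
    set R := AdjoinRoot f with hR
    set x : R := AdjoinRoot.root f with hxdef
    have hx : x^2 = x + 1 := by
      have h := AdjoinRoot.eval₂_root f
      simp only [hf, Polynomial.eval₂_sub, Polynomial.eval₂_pow, Polynomial.eval₂_add,
        Polynomial.eval₂_X, Polynomial.eval₂_one] at h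
      linear_combination h
    haveI : CharP R p := charP_of_injective_algebraMap (algebraMap (ZMod p) R).injective p
    have hinj : Function.Injective (algebraMap (ZMod p) R) := (algebraMap (ZMod p) R).injective
    have hnoroot : ∀ c : ZMod p, x ≠ algebraMap (ZMod p) R c := by
      intro c hc
      apply hroot
      refine ⟨c, hinj ?_⟩
      have h2 : (algebraMap (ZMod p) R c)^2 = algebraMap (ZMod p) R c + 1 := by
        rw [← hc]; exact hx
      rw [map_pow, map_add, map_one]
      exact h2
    set y : R := x^p with hy0
    have hy : y^2 = y + 1 := by
      have h1 : y^2 = (x^2)^p := by rw [hy0]; ring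
      rw [h1, hx, add_pow_char, one_pow]
    have hfactor : (y - x) * (y - (1 - x)) = 0 := by
      linear_combination hy - hx
    have hnat : ∀ m : ℕ, (Nat.fib m : R) = algebraMap (ZMod p) R ((Nat.fib m : ZMod p)) := by
      intro m; rw [map_natCast]
    rcases mul_eq_zero.mp hfactor with h1 | h1
    · -- x^p = x
      left
      have hyx : x^p = x := sub_eq_zero.mp h1
      obtain ⟨q, hq⟩ : ∃ q, p = q + 1 := ⟨p-1, (Nat.succ_pred_eq_of_pos hp.pos).symm⟩
      have hrel := fib_rel x hx q
      rw [← hq] at hrel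
      have hq1 : q = p - 1 := by omega
      rw [hq1] at hrel
      -- hrel : x^p = fib p * x + fib (p-1)
      rw [hyx] at hrel
      rw [hnat, hnat] at hrel
      set u : ZMod p := (Nat.fib p : ZMod p) with hu0
      set v : ZMod p := (Nat.fib (p-1) : ZMod p) with hv0
      by_cases hu : u = 1
      · have hveq : algebraMap (ZMod p) R v = 0 := by
          rw [hu, map_one] at hrel
          linear_combination hrel.symm
        have : v = 0 := hinj (by rw [hveq, map_zero])
        rwa [hv0, ZMod.natCast_eq_zero_iff] at this
      · exfalso
        have hne : (1 : ZMod p) - u ≠ 0 := sub_ne_zero.mpr (Ne.symm hu)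
        apply hnoroot (((1 : ZMod p) - u)⁻¹ * v)
        have e1 : (algebraMap (ZMod p) R) (1 - u) * x = (algebraMap (ZMod p) R) v := by
          rw [map_sub, map_one]
          linear_combination hrel
        have e2 : x = (algebraMap (ZMod p) R) ((1-u)⁻¹) * ((algebraMap (ZMod p) R) (1-u) * x) := by
          rw [← mul_assoc, ← map_mul, inv_mul_cancel₀ hne, map_one, one_mul]
        rw [e1, ← map_mul] at e2
        exact e2
    · -- x^p = 1 - x
      right
      have hyx : x^p = 1 - x := sub_eq_zero.mp h1
      have hrel := fib_rel x hx p
      -- x^(p+1) = fib (p+1) * x + fib p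
      have hpow : x^(p+1) = -1 := by
        have : x^(p+1) = x^p * x := by ring
        rw [this, hyx]
        linear_combination -hx
      rw [hpow, hnat, hnat] at hrel
      set u : ZMod p := (Nat.fib (p+1) : ZMod p) with hu0
      set v : ZMod p := (Nat.fib p : ZMod p) with hv0
      by_cases hu : u = 0
      · rwa [hu0, ZMod.natCast_eq_zero_iff] at hu
      · exfalso
        apply hnoroot (u⁻¹ * (-1 - v))
        have e1 : (algebraMap (ZMod p) R) u * x = (algebraMap (ZMod p) R) (-1 - v) := by
          rw [map_sub, map_neg, map_one]
          linear_combination -hrel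
        have e2 : x = (algebraMap (ZMod p) R) (u⁻¹) * ((algebraMap (ZMod p) R) u * x) := by
          rw [← mul_assoc, ← map_mul, inv_mul_cancel₀ hu, map_one, one_mul]
        rw [e1, ← map_mul] at e2
        exact e2

lemma zp_dvd {p : ℕ} (hp : p.Prime) (hp5 : p ≠ 5) : z p ∣ p - 1 ∨ z p ∣ p + 1 := by
  rcases apparition hp hp5 with h | h
  · exact Or.inl ((z_dvd_iff hp.pos _).mpr h)
  · exact Or.inr ((z_dvd_iff hp.pos _).mpr h)

lemma not_dvd_z_self {p : ℕ} (hp : p.Prime) (hp5 : p ≠ 5) : ¬ p ∣ z p := by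
  intro hdvd
  rcases zp_dvd hp hp5 with h | h
  · have h1 : p ∣ p - 1 := hdvd.trans h
    have h2 := hp.two_le
    have := Nat.le_of_dvd (by omega) h1
    omega
  · have h1 : p ∣ p + 1 := hdvd.trans h
    have h2 : p ∣ 1 := (Nat.dvd_add_right (dvd_refl p)).mp h1
    have h3 : p = 1 := Nat.dvd_one.mp h2
    have := hp.two_le
    omega

lemma prime_dvd_z_lt {r s : ℕ} (hr : r.Prime) (hr5 : r ≠ 5) (hs : s.Prime)
    (hdvd : s ∣ z r) : s < r ∨ (r = 2 ∧ s = 3) := by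
  by_cases hr2 : r = 2
  · subst hr2
    rw [z_two] at hdvd
    right
    exact ⟨rfl, (Nat.prime_dvd_prime_iff_eq hs (by norm_num)).mp hdvd⟩
  · left
    have hodd : Odd r := hr.odd_of_ne_two hr2
    have hr3 : 3 ≤ r := by
      rcases hr.two_le.lt_or_eq with h | h
      · omega
      · omega
    rcases zp_dvd hr hr5 with h | h
    · have h1 : s ∣ r - 1 := hdvd.trans h
      have := Nat.le_of_dvd (by omega) h1
      omega
    · have h1 : s ∣ r + 1 := hdvd.trans h
      have hle : s ≤ r + 1 := Nat.le_of_dvd (by omega) h1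
      have hne1 : s ≠ r + 1 := by
        rintro rfl
        have heven : Even (r + 1) := by
          obtain ⟨t, ht⟩ := hodd
          exact ⟨t + 1, by omega⟩
        have := (hs.even_iff).mp heven
        omega
      have hner : s ≠ r := by
        rintro rfl
        have h2 : s ∣ 1 := (Nat.dvd_add_right (dvd_refl s)).mp h1
        have h3 : s = 1 := Nat.dvd_one.mp h2
        have := hs.two_le
        omega
      omega

lemma pow_dvd_fib {p : ℕ} (hp : 2 ≤ p) :
    ∀ a, p^(a+1) ∣ Nat.fib (p^a * z p) := by
  have hppos : 0 < p := by omega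
  intro a
  induction a with
  | zero => simpa using dvd_fib_z hppos
  | succ a ih =>
    have h := pow_succ_dvd_fib_mul hp (a := a+1) (k := p^a * z p) (by omega)
      (Nat.mul_pos (Nat.pow_pos hppos) (z_pos hppos)) ih
    have he : p * (p^a * z p) = p^(a+1) * z p := by ring
    rwa [he] at h

/-- the lcm bound function -/
noncomputable def Lf (n : ℕ) : ℕ → ℕ := fun p => p ^ (n.factorization p - 1) * z p

noncomputable def L (n : ℕ) : ℕ := n.primeFactors.lcm (Lf n)

lemma Lf_pos {n p : ℕ} (hp : 0 < p) : 0 < Lf n p :=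
  Nat.mul_pos (Nat.pow_pos hp) (z_pos hp)

lemma L_ne_zero {n : ℕ} : L n ≠ 0 := by
  rw [L, Ne, Finset.lcm_eq_zero_iff]
  rintro ⟨p, hp, h0⟩
  exact (Lf_pos (Nat.pos_of_mem_primeFactors hp)).ne' h0

lemma n_dvd_fib_L {n : ℕ} (hn : 0 < n) : n ∣ Nat.fib (L n) := by
  have hfib : Nat.fib (L n) ≠ 0 := by
    have : 0 < L n := Nat.pos_of_ne_zero L_ne_zero
    exact (Nat.fib_pos.mpr this).ne'
  rw [← Nat.factorization_le_iff_dvd hn.ne' hfib, Finsupp.le_def]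
  intro q
  rcases Nat.eq_zero_or_pos (n.factorization q) with h0 | hpos
  · simp [h0]
  have hqmem : q ∈ n.primeFactors := by
    rw [← Nat.support_factorization]
    exact Finsupp.mem_support_iff.mpr hpos.ne'
  have hq : q.Prime := Nat.prime_of_mem_primeFactors hqmem
  have h1 : q ^ (n.factorization q) ∣ Nat.fib (Lf n q) := by
    have := pow_dvd_fib (p := q) hq.two_le (n.factorization q - 1)
    rwa [Nat.sub_add_cancel hpos] at this
  have h2 : Nat.fib (Lf n q) ∣ Nat.fib (L n) :=
    Nat.fib_dvd _ _ (Finset.dvd_lcm hqmem)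
  exact (hq.pow_dvd_iff_le_factorization hfib).mp (h1.trans h2)

lemma z_dvd_L {n : ℕ} (hn : 0 < n) : z n ∣ L n :=
  (z_dvd_iff hn _).mpr (n_dvd_fib_L hn)

lemma pow_dvd_of_dvd_lcm {q k a b : ℕ} (hq : Nat.Prime q) (ha : a ≠ 0) (hb : b ≠ 0)
    (h : q^k ∣ Nat.lcm a b) : q^k ∣ a ∨ q^k ∣ b := by
  rw [hq.pow_dvd_iff_le_factorization (Nat.lcm_ne_zero ha hb),
    Nat.factorization_lcm ha hb, Finsupp.sup_apply, le_sup_iff] at h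
  rcases h with h | h
  · exact Or.inl ((hq.pow_dvd_iff_le_factorization ha).mpr h)
  · exact Or.inr ((hq.pow_dvd_iff_le_factorization hb).mpr h)

lemma pow_dvd_finset_lcm {q k : ℕ} (hq : Nat.Prime q) {s : Finset ℕ} {f : ℕ → ℕ}
    (hf : ∀ i ∈ s, f i ≠ 0) (h : q^k ∣ s.lcm f) : k = 0 ∨ ∃ i ∈ s, q^k ∣ f i := by
  induction s using Finset.induction with
  | empty =>
    left
    simp only [Finset.lcm_empty] at h
    have := Nat.le_of_dvd one_pos h
    have h2 := Nat.one_le_two_pow (n := k)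
    by_contra hk
    have : 2 ^ k ≤ q ^ k := Nat.pow_le_pow_left hq.two_le k
    have : 2 ≤ 2 ^ k := by
      calc 2 = 2^1 := rfl
      _ ≤ 2^k := Nat.pow_le_pow_right (by norm_num) (by omega)
    omega
  | @insert a s hx ih =>
    rw [Finset.lcm_insert, lcm_eq_nat_lcm] at h
    have hslcm : s.lcm f ≠ 0 := by
      rw [Ne, Finset.lcm_eq_zero_iff]
      rintro ⟨p, hp, h0⟩
      exact hf p (Finset.mem_insert_of_mem hp) h0
    rcases pow_dvd_of_dvd_lcm hq (hf a (Finset.mem_insert_self a s)) hslcm h with h1 | h1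
    · exact Or.inr ⟨a, Finset.mem_insert_self a s, h1⟩
    · rcases ih (fun i hi => hf i (Finset.mem_insert_of_mem hi)) h1 with h2 | ⟨i, hi, h3⟩
      · exact Or.inl h2
      · exact Or.inr ⟨i, Finset.mem_insert_of_mem hi, h3⟩



open Nat


/-! ## the "Good" predicate -/

def Good (n : ℕ) : Prop := ∃ k : ℕ, z (z^[k] n) = z^[k] n

lemma good_step {n : ℕ} (h : Good (z n)) : Good n := by
  obtain ⟨k, hk⟩ := h
  exact ⟨k + 1, by rw [Function.iterate_succ_apply]; exact hk⟩

lemma good_fixed {n : ℕ} (h : z n = n) : Good n := ⟨0, h⟩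

/-! ## factorization bounds on `z n` -/

lemma z_factorization_le {n : ℕ} (hn : 0 < n) {q : ℕ} (hq : q.Prime) (b : ℕ)
    (hb : ∀ p ∈ n.primeFactors, (Lf n p).factorization q ≤ b) :
    (z n).factorization q ≤ b := by
  have h1 : q ^ ((z n).factorization q) ∣ z n := Nat.ordProj_dvd _ _
  have h2 : q ^ ((z n).factorization q) ∣ L n := h1.trans (z_dvd_L hn)
  rcases pow_dvd_finset_lcm hq
      (fun i hi => (Lf_pos (Nat.pos_of_mem_primeFactors hi)).ne') h2 with h | ⟨p, hp, h3⟩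
  · omega
  · exact ((hq.pow_dvd_iff_le_factorization
      (Lf_pos (Nat.pos_of_mem_primeFactors hp)).ne').mp h3).trans (hb p hp)

lemma primes_z {n : ℕ} (hn : 0 < n) {q : ℕ} (hq : q.Prime) (hdvd : q ∣ z n) :
    ∃ p ∈ n.primeFactors, q ∣ Lf n p := by
  have h2 : q ^ 1 ∣ L n := by simpa using hdvd.trans (z_dvd_L hn)
  rcases pow_dvd_finset_lcm hq
      (fun i hi => (Lf_pos (Nat.pos_of_mem_primeFactors hi)).ne') h2 with h | ⟨p, hp, h3⟩
  · omega
  · exact ⟨p, hp, by simpa using h3⟩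

lemma Lf_factorization {n p q : ℕ} (hp : p.Prime) :
    (Lf n p).factorization q
      = (if p = q then n.factorization p - 1 else 0) + (z p).factorization q := by
  rw [Lf, Nat.factorization_mul (pow_ne_zero _ hp.pos.ne') (z_pos hp.pos).ne',
    Nat.Prime.factorization_pow hp]
  simp only [Finsupp.add_apply, Finsupp.single_apply]

/-! ## the 5-power ladder -/

lemma z_five_pow_dvd (c : ℕ) : z (5^c) ∣ 5^c := by
  rcases Nat.eq_zero_or_pos c with rfl | hc
  · rw [pow_zero, z_one]
  · rw [z_dvd_iff (pow_pos (by norm_num) c)]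
    have h := pow_dvd_fib (p := 5) (by norm_num) (c - 1)
    rw [z_five] at h
    have he : 5^(c-1) * 5 = 5^c := by
      rw [← pow_succ]
      congr 1
      omega
    rw [he] at h
    rwa [Nat.sub_add_cancel hc] at h

def rank (d : ℕ) : ℕ :=
  if d = 2 then 4 else if d = 3 then 3 else if d = 4 then 2 else if d = 6 then 1 else 0

lemma good_d5_aux : ∀ m c d, d ∣ 12 → 5*c + rank d ≤ m → Good (d * 5^c) := by
  intro m
  induction m using Nat.strong_induction_on with
  | _ m IH =>
  intro c d hd hm
  obtain ⟨j, hj, hzeq⟩ := (Nat.dvd_prime_pow (by norm_num : Nat.Prime 5)).mp (z_five_pow_dvd c)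
  have h5c : (0:ℕ) < 5^c := pow_pos (by norm_num) c
  have hd12 : d ∈ ({1,2,3,4,6,12} : Finset ℕ) := by
    have h1 : 0 < d := Nat.pos_of_dvd_of_pos hd (by norm_num)
    have h2 : d ≤ 12 := Nat.le_of_dvd (by norm_num) hd
    interval_cases d <;> revert hd <;> decide
  -- generic step handler
  have main : ∀ v : ℕ, z d = v → v ∣ 12 → Nat.Coprime v 5 →
      (j = c → rank v < rank d ∨ v * 5^c = d * 5^c) → Good (d * 5^c) := by
    intro v hzd hv12 hcop hrank
    have hdpos : 0 < d := Nat.pos_of_dvd_of_pos hd (by norm_num)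
    have hcopd : Nat.Coprime d (5^c) := by
      have : Nat.Coprime d 5 := Nat.Coprime.coprime_dvd_left hd (by decide)
      exact this.pow_right c
    have hmul : z (d * 5^c) = Nat.lcm (z d) (z (5^c)) := z_mul_coprime hdpos h5c hcopd
    rw [hzd, hzeq] at hmul
    have hlcm : Nat.lcm v (5^j) = v * 5^j := (hcop.pow_right j).lcm_eq_mul
    rw [hlcm] at hmul
    rcases lt_or_eq_of_le hj with hlt | heq
    · apply good_step
      rw [hmul]
      apply IH (5*j + rank v) (by have : rank v ≤ 4 := by unfold rank; split_ifs <;> omega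
                                  have : rank d ≤ 4 := by unfold rank; split_ifs <;> omega
                                  omega) j v hv12 le_rfl
    · subst heq
      rcases hrank rfl with hlt | hfix
      · apply good_step
        rw [hmul]
        apply IH (5*j + rank v) (by omega) j v hv12 le_rfl
      · apply good_fixed
        rw [hmul, hfix]
  fin_cases hd12
  · exact main 1 z_one (by norm_num) (by decide) (fun _ => Or.inr (by norm_num))
  · exact main 3 z_two (by norm_num) (by decide) (fun _ => Or.inl (by decide))
  · exact main 4 z_three (by norm_num) (by decide) (fun _ => Or.inl (by decide))
  · exact main 6 z_four (by norm_num) (by decide) (fun _ => Or.inl (by decide))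
  · exact main 12 z_six (by norm_num) (by decide) (fun _ => Or.inl (by decide))
  · exact main 12 z_twelve (by norm_num) (by decide) (fun _ => Or.inr (by norm_num))

lemma good_d5 (c d : ℕ) (hd : d ∣ 12) : Good (d * 5^c) :=
  good_d5_aux (5*c + rank d) c d hd le_rfl

end ZProof

namespace ZProof2
open ZProof Nat

lemma fact4 : (4:ℕ).factorization 2 = 2 := by
  rw [show (4:ℕ) = 2^2 by norm_num, Nat.Prime.factorization_pow (by norm_num)]
  simp

lemma fact4' : (4:ℕ).factorization 3 = 0 :=
  Nat.factorization_eq_zero_of_not_dvd (by norm_num)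

lemma good_endgame {n : ℕ} (hn : 0 < n)
    (hsm : ∀ q ∈ n.primeFactors, q = 2 ∨ q = 3 ∨ q = 5)
    (h2 : n.factorization 2 ≤ 2) (h3 : n.factorization 3 ≤ 1) : Good n := by
  set c := n.factorization 5 with hc
  set d := ordCompl[5] n with hdd
  have hnd : 5^c * d = n := Nat.ordProj_mul_ordCompl_eq_self n 5
  have hd0 : d ≠ 0 := (Nat.ordCompl_pos 5 hn.ne').ne'
  have hqn : ∀ q : ℕ, q ≠ 2 → q ≠ 3 → q ≠ 5 → n.factorization q = 0 := by
    intro q hq2 hq3 hq5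
    by_contra h0
    have hmem : q ∈ n.primeFactors := by
      rw [← Nat.support_factorization]
      exact Finsupp.mem_support_iff.mpr h0
    rcases hsm q hmem with rfl | rfl | rfl <;> simp_all
  have hd12 : d ∣ 12 := by
    rw [← Nat.factorization_le_iff_dvd hd0 (by norm_num), Finsupp.le_def]
    intro q
    have hdq : d.factorization q = if q = 5 then 0 else n.factorization q := by
      rw [hdd, Nat.factorization_ordCompl]
      by_cases h : q = 5
      · simp [h]
      · rw [Finsupp.erase_ne h, if_neg h]
    have h12 : (12:ℕ).factorization q
        = (if 2 = q then 2 else 0) + (if 3 = q then 1 else 0) := by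
      rw [show (12:ℕ) = 2^2 * 3 by norm_num,
        Nat.factorization_mul (by norm_num) (by norm_num),
        Nat.Prime.factorization_pow (by norm_num),
        Nat.Prime.factorization (by norm_num)]
      simp only [Finsupp.add_apply, Finsupp.single_apply]
    rw [hdq, h12]
    by_cases hq5 : q = 5
    · simp [hq5]
    by_cases hq2 : q = 2
    · subst hq2; simp_all
    by_cases hq3 : q = 3
    · subst hq3; simp_all
    · rw [if_neg hq5, hqn q hq2 hq3 hq5]
      omega
  have hgood : Good (d * 5^c) := good_d5 c d hd12
  rwa [mul_comm, hnd] at hgood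

lemma smooth_z {n : ℕ} (hn : 0 < n)
    (hsm : ∀ q ∈ n.primeFactors, q = 2 ∨ q = 3 ∨ q = 5) :
    (∀ q ∈ (z n).primeFactors, q = 2 ∨ q = 3 ∨ q = 5) ∧
    (z n).factorization 2 ≤ max (n.factorization 2 - 1) 2 ∧
    (z n).factorization 3 ≤ max (n.factorization 3 - 1) 1 := by
  refine ⟨?_, ?_, ?_⟩
  · intro q hq
    have hqp : q.Prime := Nat.prime_of_mem_primeFactors hq
    obtain ⟨p, hpmem, hdvd⟩ := primes_z hn hqp (Nat.dvd_of_mem_primeFactors hq)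
    rcases (Nat.Prime.dvd_mul hqp).mp hdvd with h | h
    · have h1 : q ∣ p := hqp.dvd_of_dvd_pow h
      have h2 : q = p :=
        (Nat.prime_dvd_prime_iff_eq hqp (Nat.prime_of_mem_primeFactors hpmem)).mp h1
      subst h2
      exact hsm q hpmem
    · rcases hsm p hpmem with rfl | rfl | rfl
      · rw [z_two] at h
        exact Or.inr (Or.inl ((Nat.prime_dvd_prime_iff_eq hqp (by norm_num)).mp h))
      · rw [z_three] at h
        have h1 : q ∣ 2 := hqp.dvd_of_dvd_pow (by rwa [show (4:ℕ) = 2^2 by norm_num] at h)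
        exact Or.inl ((Nat.prime_dvd_prime_iff_eq hqp (by norm_num)).mp h1)
      · rw [z_five] at h
        exact Or.inr (Or.inr ((Nat.prime_dvd_prime_iff_eq hqp (by norm_num)).mp h))
  · apply z_factorization_le hn (by norm_num : Nat.Prime 2)
    intro p hpmem
    rw [Lf_factorization (Nat.prime_of_mem_primeFactors hpmem)]
    rcases hsm p hpmem with rfl | rfl | rfl
    · rw [z_two, if_pos rfl, Nat.factorization_eq_zero_of_not_dvd (by norm_num : ¬ (2:ℕ) ∣ 3)]
      exact le_max_iff.mpr (Or.inl (by omega))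
    · rw [z_three, if_neg (by norm_num), fact4]
      simp
    · rw [z_five, if_neg (by norm_num),
        Nat.factorization_eq_zero_of_not_dvd (by norm_num : ¬ (2:ℕ) ∣ 5)]
      simp
  · apply z_factorization_le hn (by norm_num : Nat.Prime 3)
    intro p hpmem
    rw [Lf_factorization (Nat.prime_of_mem_primeFactors hpmem)]
    rcases hsm p hpmem with rfl | rfl | rfl
    · rw [z_two, if_neg (by norm_num), Nat.Prime.factorization (by norm_num)]
      simp
    · rw [z_three, if_pos rfl, fact4']
      exact le_max_iff.mpr (Or.inl (by omega))
    · rw [z_five, if_neg (by norm_num),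
        Nat.factorization_eq_zero_of_not_dvd (by norm_num : ¬ (3:ℕ) ∣ 5)]
      simp

lemma good_235_aux : ∀ m n, 0 < n → (∀ q ∈ n.primeFactors, q = 2 ∨ q = 3 ∨ q = 5) →
    (n.factorization 2 - 2) + (n.factorization 3 - 1) ≤ m → Good n := by
  intro m
  induction m with
  | zero =>
    intro n hn hsm hμ
    exact good_endgame hn hsm (by omega) (by omega)
  | succ m ih =>
    intro n hn hsm hμ
    by_cases h0 : (n.factorization 2 - 2) + (n.factorization 3 - 1) = 0
    · exact good_endgame hn hsm (by omega) (by omega)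
    · obtain ⟨hsm', hb2, hb3⟩ := smooth_z hn hsm
      apply good_step
      apply ih (z n) (z_pos hn) hsm'
      omega

lemma good_235 {n : ℕ} (hn : 0 < n)
    (hsm : ∀ q ∈ n.primeFactors, q = 2 ∨ q = 3 ∨ q = 5) : Good n :=
  good_235_aux _ n hn hsm le_rfl

end ZProof2

namespace ZProof3
open ZProof ZProof2 Nat

lemma good_all : ∀ p n, 0 < n → (∀ q ∈ n.primeFactors, q ≤ p) → Good n := by
  intro p
  induction p using Nat.strong_induction_on with
  | _ p IH =>
  intro n hn hle
  by_cases hp5 : p ≤ 5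
  · apply good_235 hn
    intro q hq
    have hqp := Nat.prime_of_mem_primeFactors hq
    have h1 := hqp.two_le
    have h2 := (hle q hq).trans hp5
    interval_cases q
    · exact Or.inl rfl
    · exact Or.inr (Or.inl rfl)
    · exact absurd hqp (by norm_num)
    · exact Or.inr (Or.inr rfl)
  · by_cases hpp : p.Prime ∧ p ∣ n
    · obtain ⟨hpprime, hpdvd⟩ := hpp
      have hp7 : 7 ≤ p := by
        by_contra h
        have h6 : p = 6 := by omega
        rw [h6] at hpprime
        norm_num at hpprime
      have inner : ∀ a, ∀ n, 0 < n → (∀ q ∈ n.primeFactors, q ≤ p) →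
          n.factorization p ≤ a → Good n := by
        intro a
        induction a with
        | zero =>
          intro n hn hle hν
          apply IH (p-1) (by omega) n hn
          intro q hq
          have h1 := hle q hq
          rcases Nat.lt_or_ge q p with h | h
          · omega
          · have hq' : q = p := by omega
            subst hq'
            have := (Nat.Prime.factorization_pos_of_dvd hpprime hn.ne'
              (Nat.dvd_of_mem_primeFactors hq))
            omega
        | succ a ih =>
          intro n hn hle hν
          apply good_step
          have hzpos := z_pos hn
          apply ih (z n) hzpos
          · intro q hq
            have hqp := Nat.prime_of_mem_primeFactors hq
            obtain ⟨r, hrmem, hdvd⟩ := primes_z hn hqp (Nat.dvd_of_mem_primeFactors hq)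
            rcases (Nat.Prime.dvd_mul hqp).mp hdvd with h | h
            · have h1 : q ∣ r := hqp.dvd_of_dvd_pow h
              have h2 : q = r := (Nat.prime_dvd_prime_iff_eq hqp
                (Nat.prime_of_mem_primeFactors hrmem)).mp h1
              subst h2
              exact hle q hrmem
            · have hrp := Nat.prime_of_mem_primeFactors hrmem
              by_cases hr5 : r = 5
              · subst hr5
                rw [z_five] at h
                have : q = 5 := (Nat.prime_dvd_prime_iff_eq hqp (by norm_num)).mp h
                omega
              · rcases prime_dvd_z_lt hrp hr5 hqp h with h' | ⟨h1, h2⟩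
                · have := hle r hrmem; omega
                · omega
          · apply z_factorization_le hn hpprime
            intro r hrmem
            rw [Lf_factorization (Nat.prime_of_mem_primeFactors hrmem)]
            by_cases hrp : r = p
            · subst hrp
              rw [if_pos rfl, Nat.factorization_eq_zero_of_not_dvd
                (not_dvd_z_self hpprime (by omega))]
              omega
            · rw [if_neg hrp, Nat.factorization_eq_zero_of_not_dvd ?_]
              · omega
              · intro hdvd
                have hrp' := Nat.prime_of_mem_primeFactors hrmem
                by_cases hr5 : r = 5
                · subst hr5
                  rw [z_five] at hdvd
                  have : p = 5 := (Nat.prime_dvd_prime_iff_eq hpprime (by norm_num)).mp hdvd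
                  omega
                · rcases prime_dvd_z_lt hrp' hr5 hpprime hdvd with h | ⟨h1, h2⟩
                  · have := hle r hrmem; omega
                  · omega
      exact inner (n.factorization p) n hn hle le_rfl
    · apply IH (p-1) (by omega) n hn
      intro q hq
      have h1 := hle q hq
      have h2 : q ≠ p := by
        rintro rfl
        exact hpp ⟨Nat.prime_of_mem_primeFactors hq, Nat.dvd_of_mem_primeFactors hq⟩
      omega

end ZProof3

theorem all_reach_fixed_point (n : ℕ) (hn : 0 < n) :
    ∃ k : ℕ, z (z^[k] n) = z^[k] n :=
  ZProof3.good_all n n hn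
    (fun q hq => Nat.le_of_dvd hn (Nat.dvd_of_mem_primeFactors hq))
end
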